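/- arXiv:1803.11011 — 5 statements merged into one kernel-verified Lean document; each statement's English description precedes it below -/
import Mathlib

section
/- Let Q_0 = p_j, Q_1 = q_j and let S_j be a bounded operator acting only on the j-th factor of the tensor product. Then for μ, ν ∈ {0,1}, Q_μ f̂ S_j Q_ν = Q_μ S_j f̂_{μ-ν} Q_ν, where f̂_d is the shifted weighted operator. -/
/- STATEMENT 4: With `Q_0 = p_j`, `Q_1 = q_j` and `S_j` a bounded operator acting only on
the `j`-th factor (abstracted: commuting with `p_i` for `i ≠ j`), for `μ, ν ∈ {0,1}`:
`Q_μ f̂ S_j Q_ν = Q_μ S_j f̂_{μ-ν} Q_ν`. -/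

noncomputable section

def symP {E : Type*} [NormedAddCommGroup E] [InnerProductSpace ℂ E]
    (N : ℕ) (p q : Fin N → E →L[ℂ] E) (k : ℕ) : E →L[ℂ] E :=
  ∑ J ∈ Finset.powersetCard k (Finset.univ : Finset (Fin N)),
    ((List.finRange N).map (fun j => if j ∈ J then q j else p j)).prod

def hatW {E : Type*} [NormedAddCommGroup E] [InnerProductSpace ℂ E]
    (N : ℕ) (P : ℕ → E →L[ℂ] E) (f : ℕ → ℝ) : E →L[ℂ] E :=
  ∑ k ∈ Finset.range (N + 1), (f k : ℂ) • P k

def hatShiftW {E : Type*} [NormedAddCommGroup E] [InnerProductSpace ℂ E]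
    (N : ℕ) (P : ℕ → E →L[ℂ] E) (f : ℕ → ℝ) (d : ℤ) : E →L[ℂ] E :=
  ∑ j ∈ Finset.range (N + 1),
    (if 0 ≤ (j : ℤ) + d ∧ (j : ℤ) + d ≤ (N : ℤ) then ((f ((j : ℤ) + d).toNat : ℝ) : ℂ) else 0) • P j

lemma pull_out {M : Type*} [Monoid M] {N : ℕ} (g : Fin N → M) (j₀ : Fin N)
    (h : ∀ i, Commute (g j₀) (g i)) :
    ((List.finRange N).map g).prod
      = g j₀ * ((List.finRange N).map (fun i => if i = j₀ then 1 else g i)).prod := by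
  obtain ⟨s, t, hst⟩ := List.append_of_mem (List.mem_finRange j₀)
  have hnd : (s ++ j₀ :: t).Nodup := hst ▸ List.nodup_finRange N
  have hs : j₀ ∉ s := fun hm => (List.disjoint_of_nodup_append hnd) hm List.mem_cons_self
  have ht : j₀ ∉ t := by
    have := (List.nodup_append.mp hnd).2.1
    exact (List.nodup_cons.mp this).1
  have hmap : ∀ l : List (Fin N), j₀ ∉ l →
      l.map (fun i => if i = j₀ then 1 else g i) = l.map g := by
    intro l hl
    apply List.map_congr_left
    intro i hi
    have : i ≠ j₀ := fun h' => hl (h' ▸ hi)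
    rw [if_neg this]
  have hcs : Commute (g j₀) ((s.map g).prod) :=
    Commute.list_prod_right _ _ (by
      rintro x hx
      obtain ⟨i, _, rfl⟩ := List.mem_map.mp hx
      exact h i)
  rw [hst, List.map_append, List.prod_append, List.map_cons, List.prod_cons,
      List.map_append, List.prod_append, List.map_cons, List.prod_cons,
      hmap s hs, hmap t ht, if_pos rfl, one_mul, ← mul_assoc, ← hcs.eq, mul_assoc]

variable {E : Type*} [NormedAddCommGroup E] [InnerProductSpace ℂ E]

/-- the product over all factors except `j₀` (factor at `j₀` replaced by `1`). -/
def Gfac (N : ℕ) (p q : Fin N → E →L[ℂ] E) (j₀ : Fin N) (J : Finset (Fin N)) : E →L[ℂ] E :=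
  ((List.finRange N).map
    (fun i => if i = j₀ then 1 else if i ∈ J then q i else p i)).prod

def Aop (N : ℕ) (p q : Fin N → E →L[ℂ] E) (j₀ : Fin N) (k : ℕ) : E →L[ℂ] E :=
  ∑ J ∈ (Finset.powersetCard k (Finset.univ : Finset (Fin N))).filter (fun J => j₀ ∉ J),
    Gfac N p q j₀ J

def Bop (N : ℕ) (p q : Fin N → E →L[ℂ] E) (j₀ : Fin N) (k : ℕ) : E →L[ℂ] E :=
  ∑ J ∈ (Finset.powersetCard k (Finset.univ : Finset (Fin N))).filter (fun J => j₀ ∈ J),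
    Gfac N p q j₀ J

section facts

variable {N : ℕ} {p q : Fin N → E →L[ℂ] E} {j₀ : Fin N}
variable (hcomm : ∀ i j, Commute (p i) (p j)) (hq : ∀ j, q j = 1 - p j)

include hcomm hq in
lemma comm_pq (i k : Fin N) : Commute (p i) (q k) := by
  rw [hq]
  exact (Commute.one_right _).sub_right (hcomm i k)

include hcomm hq in
lemma comm_qp (i k : Fin N) : Commute (q i) (p k) := (comm_pq hcomm hq k i).symm

include hcomm hq in
lemma comm_qq (i k : Fin N) : Commute (q i) (q k) := by
  rw [hq k]
  exact (Commute.one_right _).sub_right (comm_qp hcomm hq i k)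

include hcomm hq in
lemma comm_ite (J K : Finset (Fin N)) (i k : Fin N) :
    Commute (if i ∈ J then q i else p i) (if k ∈ K then q k else p k) := by
  split_ifs
  · exact comm_qq hcomm hq i k
  · exact comm_qp hcomm hq i k
  · exact comm_pq hcomm hq i k
  · exact hcomm i k

include hq in
lemma comm_G (T : E →L[ℂ] E) (hT : ∀ i, i ≠ j₀ → Commute T (p i)) (J : Finset (Fin N)) :
    Commute T (Gfac N p q j₀ J) := by
  apply Commute.list_prod_right
  rintro x hx
  obtain ⟨i, _, rfl⟩ := List.mem_map.mp hx
  by_cases h1 : i = j₀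
  · rw [if_pos h1]; exact Commute.one_right T
  · rw [if_neg h1]
    by_cases h2 : i ∈ J
    · rw [if_pos h2, hq]
      exact (Commute.one_right T).sub_right (hT i h1)
    · rw [if_neg h2]; exact hT i h1

include hq in
lemma comm_A (T : E →L[ℂ] E) (hT : ∀ i, i ≠ j₀ → Commute T (p i)) (k : ℕ) :
    Commute T (Aop N p q j₀ k) :=
  Commute.sum_right _ _ _ (fun J _ => comm_G hq T hT J)

include hq in
lemma comm_B (T : E →L[ℂ] E) (hT : ∀ i, i ≠ j₀ → Commute T (p i)) (k : ℕ) :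
    Commute T (Bop N p q j₀ k) :=
  Commute.sum_right _ _ _ (fun J _ => comm_G hq T hT J)

include hcomm hq in
lemma symP_split (k : ℕ) :
    symP N p q k = p j₀ * Aop N p q j₀ k + q j₀ * Bop N p q j₀ k := by
  unfold symP Aop Bop
  rw [← Finset.sum_filter_add_sum_filter_not
    (Finset.powersetCard k (Finset.univ : Finset (Fin N))) (fun J => j₀ ∉ J),
    Finset.mul_sum, Finset.mul_sum]
  congr 1
  · apply Finset.sum_congr rfl
    intro J hJ
    have hJ' : j₀ ∉ J := (Finset.mem_filter.mp hJ).2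
    rw [pull_out (fun i => if i ∈ J then q i else p i) j₀
      (fun i => comm_ite hcomm hq J J j₀ i)]
    simp only [if_neg hJ']
    rfl
  · apply Finset.sum_congr
    · ext J
      simp [Finset.mem_filter]
    · intro J hJ
      have hJ' : j₀ ∈ J := by
        have := (Finset.mem_filter.mp hJ).2
        simpa using this
      rw [pull_out (fun i => if i ∈ J then q i else p i) j₀
        (fun i => comm_ite hcomm hq J J j₀ i)]
      simp only [if_pos hJ']
      rfl

end facts

end
noncomputable section part2

variable {E : Type*} [NormedAddCommGroup E] [InnerProductSpace ℂ E]
variable {N : ℕ} {p q : Fin N → E →L[ℂ] E} {j₀ : Fin N}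

lemma Gfac_congr {J K : Finset (Fin N)} (h : ∀ i, i ≠ j₀ → (i ∈ J ↔ i ∈ K)) :
    Gfac N p q j₀ J = Gfac N p q j₀ K := by
  unfold Gfac
  congr 1
  apply List.map_congr_left
  intro i _
  by_cases h1 : i = j₀
  · simp [h1]
  · simp only [if_neg h1, h i h1]

lemma Bop_succ (k : ℕ) : Bop N p q j₀ (k + 1) = Aop N p q j₀ k := by
  unfold Bop Aop
  apply Finset.sum_nbij' (i := fun J => J.erase j₀) (j := fun J => insert j₀ J)
  · intro J hJ
    obtain ⟨hJm, hJ2⟩ := Finset.mem_filter.mp hJ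
    rw [Finset.mem_powersetCard_univ] at hJm
    rw [Finset.mem_filter, Finset.mem_powersetCard_univ, Finset.card_erase_of_mem hJ2, hJm]
    exact ⟨rfl, Finset.notMem_erase _ _⟩
  · intro J hJ
    obtain ⟨hJm, hJ2⟩ := Finset.mem_filter.mp hJ
    rw [Finset.mem_powersetCard_univ] at hJm
    rw [Finset.mem_filter, Finset.mem_powersetCard_univ, Finset.card_insert_of_notMem hJ2, hJm]
    exact ⟨rfl, Finset.mem_insert_self _ _⟩
  · intro J hJ
    exact Finset.insert_erase (Finset.mem_filter.mp hJ).2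
  · intro J hJ
    exact Finset.erase_insert (Finset.mem_filter.mp hJ).2
  · intro J hJ
    apply Gfac_congr
    intro i hi
    simp [Finset.mem_erase, hi]

lemma Aop_top : Aop N p q j₀ N = 0 := by
  unfold Aop
  convert Finset.sum_empty
  ext J
  simp only [Finset.mem_filter, Finset.mem_powersetCard_univ, Finset.notMem_empty, iff_false,
    not_and]
  intro hc
  have : J = Finset.univ := Finset.eq_univ_of_card J (by simp [hc])
  simp [this]

lemma Bop_zero : Bop N p q j₀ 0 = 0 := by
  unfold Bop
  convert Finset.sum_empty
  ext J
  simp only [Finset.powersetCard_zero, Finset.mem_filter, Finset.mem_singleton,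
    Finset.notMem_empty, iff_false, not_and]
  rintro rfl
  simp

end part2
noncomputable section part3

variable {E : Type*} [NormedAddCommGroup E] [InnerProductSpace ℂ E]
variable {N : ℕ} {p q : Fin N → E →L[ℂ] E} {j₀ : Fin N}
variable (hidem : ∀ j, IsIdempotentElem (p j))
variable (hcomm : ∀ i j, Commute (p i) (p j)) (hq : ∀ j, q j = 1 - p j)

include hidem hq in
lemma PQ_zero : p j₀ * q j₀ = 0 := by
  rw [hq, mul_sub, mul_one, (hidem j₀ : _ = _), sub_self]

include hidem hq in
lemma QP_zero : q j₀ * p j₀ = 0 := by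
  rw [hq, sub_mul, one_mul, (hidem j₀ : _ = _), sub_self]

include hidem hq in
lemma QQ_idem : q j₀ * q j₀ = q j₀ := by
  rw [hq, sub_mul, one_mul, mul_sub, mul_one, (hidem j₀ : _ = _)]; abel

include hidem hcomm hq in
lemma P_symP (k : ℕ) : p j₀ * symP N p q k = p j₀ * Aop N p q j₀ k := by
  rw [symP_split hcomm hq, mul_add, ← mul_assoc, ← mul_assoc, (hidem j₀ : _ = _),
    PQ_zero hidem hq, zero_mul, add_zero]

include hidem hcomm hq in
lemma Q_symP (k : ℕ) : q j₀ * symP N p q k = q j₀ * Bop N p q j₀ k := by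
  rw [symP_split hcomm hq, mul_add, ← mul_assoc, ← mul_assoc, QP_zero hidem hq,
    QQ_idem hidem hq, zero_mul, zero_add]

include hidem hcomm hq in
lemma symP_P (k : ℕ) : symP N p q k * p j₀ = Aop N p q j₀ k * p j₀ := by
  have cA : Commute (p j₀) (Aop N p q j₀ k) := comm_A hq (p j₀) (fun i _ => hcomm j₀ i) k
  have cB : Commute (q j₀) (Bop N p q j₀ k) :=
    comm_B hq (q j₀) (fun i _ => comm_qp hcomm hq j₀ i) k
  rw [symP_split hcomm hq, add_mul, mul_assoc, mul_assoc, ← mul_assoc (p j₀), cA.eq,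
    mul_assoc, (hidem j₀ : _ = _), ← mul_assoc (q j₀), cB.eq, mul_assoc,
    QP_zero hidem hq, mul_zero, add_zero]

include hidem hcomm hq in
lemma symP_Q (k : ℕ) : symP N p q k * q j₀ = Bop N p q j₀ k * q j₀ := by
  have cA : Commute (p j₀) (Aop N p q j₀ k) := comm_A hq (p j₀) (fun i _ => hcomm j₀ i) k
  have cB : Commute (q j₀) (Bop N p q j₀ k) :=
    comm_B hq (q j₀) (fun i _ => comm_qp hcomm hq j₀ i) k
  rw [symP_split hcomm hq, add_mul, mul_assoc, mul_assoc, ← mul_assoc (p j₀), cA.eq,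
    mul_assoc, PQ_zero hidem hq, mul_zero, ← mul_assoc (q j₀), cB.eq, mul_assoc,
    QQ_idem hidem hq, zero_add]

include hidem hcomm hq in
lemma sandwichP (S : E →L[ℂ] E) (hS : ∀ i, i ≠ j₀ → Commute S (p i)) (k : ℕ)
    (Y : E →L[ℂ] E) :
    p j₀ * (symP N p q k * (S * Y)) = p j₀ * (S * (Aop N p q j₀ k * Y)) := by
  have cS : Commute S (Aop N p q j₀ k) := comm_A hq S hS k
  rw [← mul_assoc, P_symP hidem hcomm hq, mul_assoc, ← mul_assoc (Aop N p q j₀ k),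
    ← cS.eq, mul_assoc]

include hidem hcomm hq in
lemma sandwichQ (S : E →L[ℂ] E) (hS : ∀ i, i ≠ j₀ → Commute S (p i)) (k : ℕ)
    (Y : E →L[ℂ] E) :
    q j₀ * (symP N p q k * (S * Y)) = q j₀ * (S * (Bop N p q j₀ k * Y)) := by
  have cS : Commute S (Bop N p q j₀ k) := comm_B hq S hS k
  rw [← mul_assoc, Q_symP hidem hcomm hq, mul_assoc, ← mul_assoc (Bop N p q j₀ k),
    ← cS.eq, mul_assoc]

end part3
theorem stmt4 {E : Type*} [NormedAddCommGroup E] [InnerProductSpace ℂ E] [CompleteSpace E]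
    (N : ℕ) (p q : Fin N → E →L[ℂ] E)
    (hidem : ∀ j, IsIdempotentElem (p j))
    (hsa : ∀ j, IsSelfAdjoint (p j))
    (hcomm : ∀ i j, Commute (p i) (p j))
    (hq : ∀ j, q j = 1 - p j)
    (f : ℕ → ℝ) (hf : ∀ k, 0 ≤ f k)
    (j₀ : Fin N) (S : E →L[ℂ] E)
    (hS : ∀ i, i ≠ j₀ → Commute S (p i)) :
    ∀ μ ν : Fin 2,
      (![p j₀, q j₀] μ) * hatW N (symP N p q) f * S * (![p j₀, q j₀] ν) =
      (![p j₀, q j₀] μ) * S * hatShiftW N (symP N p q) f (((μ : ℕ) : ℤ) - ((ν : ℕ) : ℤ))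
        * (![p j₀, q j₀] ν) := by
  intro μ ν
  fin_cases μ <;> fin_cases ν <;>
    simp only [Matrix.cons_val_zero, Matrix.cons_val_one, Matrix.head_cons, Fin.isValue,
      Fin.val_zero, Fin.val_one, Nat.cast_zero, Nat.cast_one, sub_zero, zero_sub, sub_self,
      Fin.zero_eta, Fin.mk_one, add_zero,
      hatW, hatShiftW, Finset.mul_sum, Finset.sum_mul, smul_mul_assoc, mul_smul_comm, mul_assoc]
  -- case (0,0)
  · simp only [sandwichP hidem hcomm hq S hS, symP_P hidem hcomm hq]
    refine Finset.sum_congr rfl fun k hk => ?_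
    have hkN : (k : ℤ) ≤ N := by
      exact_mod_cast Nat.lt_succ_iff.mp (Finset.mem_range.mp hk)
    rw [if_pos ⟨Int.natCast_nonneg k, hkN⟩, Int.toNat_natCast]
  -- case (0,1), shift d = -1
  · simp only [sandwichP hidem hcomm hq S hS, symP_Q hidem hcomm hq]
    rw [Finset.sum_range_succ, Aop_top, Finset.sum_range_succ']
    simp only [zero_mul, mul_zero, smul_zero, add_zero]
    have h0 : ¬ (0 ≤ ((0 : ℕ) : ℤ) + -1 ∧ ((0 : ℕ) : ℤ) + -1 ≤ (N : ℤ)) := by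
      norm_num
    rw [if_neg h0, zero_smul, add_zero]
    refine Finset.sum_congr rfl fun j hj => ?_
    have hjN : j < N := Finset.mem_range.mp hj
    have h1 : ((j + 1 : ℕ) : ℤ) + -1 = (j : ℤ) := by push_cast; ring
    rw [h1, if_pos ⟨Int.natCast_nonneg j, by exact_mod_cast hjN.le⟩, Int.toNat_natCast,
      Bop_succ]
  -- case (1,0), shift d = 1
  · simp only [sandwichQ hidem hcomm hq S hS, symP_P hidem hcomm hq]
    rw [Finset.sum_range_succ', Finset.sum_range_succ]
    simp only [Bop_zero, Bop_succ, zero_mul, mul_zero, smul_zero, add_zero]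
    have hN : ¬ (0 ≤ ((N : ℕ) : ℤ) + 1 ∧ ((N : ℕ) : ℤ) + 1 ≤ (N : ℤ)) := by
      push_cast; omega
    rw [if_neg hN, zero_smul, add_zero]
    refine Finset.sum_congr rfl fun j hj => ?_
    have hjN : j < N := Finset.mem_range.mp hj
    have h1 : ((j : ℕ) : ℤ) + 1 = ((j + 1 : ℕ) : ℤ) := by push_cast; ring
    rw [h1, if_pos ⟨Int.natCast_nonneg _, by exact_mod_cast hjN⟩, Int.toNat_natCast]
  -- case (1,1)
  · simp only [sandwichQ hidem hcomm hq S hS, symP_Q hidem hcomm hq]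
    refine Finset.sum_congr rfl fun k hk => ?_
    have hkN : (k : ℤ) ≤ N := by
      exact_mod_cast Nat.lt_succ_iff.mp (Finset.mem_range.mp hk)
    rw [if_pos ⟨Int.natCast_nonneg k, hkN⟩, Int.toNat_natCast]
end

section
/- For a bounded operator T_{12} acting only on the first two tensor factors and any weight f, the commutator identity [T_{12}, f̂] = [T_{12}, p_1 p_2 (f̂ - f̂_2) + (p_1 q_2 + q_1 p_2)(f̂ - f̂_1)] holds. -/
/- STATEMENT 5: For a bounded operator `T₁₂` acting only on the first two tensor factors
(abstracted: commuting with `p_i` for `i ≠ 1, 2`) and any weight `f`: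
`[T₁₂, f̂] = [T₁₂, p₁p₂(f̂ − f̂₂) + (p₁q₂ + q₁p₂)(f̂ − f̂₁)]`. -/

noncomputable section

namespace Stmt5Aux

open Finset

lemma sum_pc_insert {α β : Type*} [DecidableEq α] [AddCommMonoid β]
    {a : α} {s : Finset α} (ha : a ∉ s) (k : ℕ) (F : Finset α → β) :
    ∑ J ∈ powersetCard (k + 1) (insert a s), F J =
      (∑ J ∈ powersetCard (k + 1) s, F J) +
        ∑ J ∈ powersetCard k s, F (insert a J) := by
  rw [powersetCard_succ_insert ha, sum_union, sum_image]
  · intro x hx y hy hxy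
    have hax : a ∉ x := fun h => ha ((mem_powersetCard.mp hx).1 h)
    have hay : a ∉ y := fun h => ha ((mem_powersetCard.mp hy).1 h)
    rw [← erase_insert hax, hxy, erase_insert hay]
  · rw [disjoint_left]
    intro J hJ hJ'
    obtain ⟨y, _, rfl⟩ := mem_image.mp hJ'
    exact ha ((mem_powersetCard.mp hJ).1 (mem_insert_self a y))

variable {E : Type*} [NormedAddCommGroup E] [InnerProductSpace ℂ E]

lemma list_prod_eq {N : ℕ} (g : Fin N → E →L[ℂ] E)
    (comm : ((Finset.univ : Finset (Fin N)) : Set (Fin N)).Pairwise (Function.onFun Commute g)) :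
    ((List.finRange N).map g).prod = Finset.univ.noncommProd g comm := by
  simp [Finset.noncommProd, Fin.univ_def]

def gsel {N : ℕ} (p q : Fin N → E →L[ℂ] E) (J : Finset (Fin N)) (j : Fin N) :
    E →L[ℂ] E := if j ∈ J then q j else p j

variable {N : ℕ} (p q : Fin N → E →L[ℂ] E)

def Rop (hg : ∀ (J : Finset (Fin N)) (i j : Fin N), Commute (gsel p q J i) (gsel p q J j))
    (s : Finset (Fin N)) (m : ℕ) : E →L[ℂ] E :=
  ∑ K ∈ powersetCard m s, s.noncommProd (gsel p q K) (fun x _ y _ _ => hg K x y)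

def Rm1 (hg : ∀ (J : Finset (Fin N)) (i j : Fin N), Commute (gsel p q J i) (gsel p q J j))
    (s : Finset (Fin N)) : ℕ → E →L[ℂ] E
  | 0 => 0
  | (m + 1) => Rop p q hg s m

def Rm2 (hg : ∀ (J : Finset (Fin N)) (i j : Fin N), Commute (gsel p q J i) (gsel p q J j))
    (s : Finset (Fin N)) : ℕ → E →L[ℂ] E
  | 0 => 0
  | 1 => 0
  | (m + 2) => Rop p q hg s m

def Fnc (hg : ∀ (J : Finset (Fin N)) (i j : Fin N), Commute (gsel p q J i) (gsel p q J j))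
    (J : Finset (Fin N)) : E →L[ℂ] E :=
  Finset.univ.noncommProd (gsel p q J) (fun x _ y _ _ => hg J x y)

variable (hg : ∀ (J : Finset (Fin N)) (i j : Fin N), Commute (gsel p q J i) (gsel p q J j))

lemma Rop_eq_zero (s : Finset (Fin N)) {m : ℕ} (h : s.card < m) :
    Rop p q hg s m = 0 := by
  rw [Rop, powersetCard_eq_empty.mpr h, sum_empty]

lemma nc_congr_insert {s : Finset (Fin N)} {a : Fin N} (ha : a ∉ s) (K : Finset (Fin N)) :
    s.noncommProd (gsel p q (insert a K)) (fun x _ y _ _ => hg _ x y) =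
      s.noncommProd (gsel p q K) (fun x _ y _ _ => hg _ x y) :=
  noncommProd_congr rfl (fun x hx => by
    have hxa : x ≠ a := fun h => ha (h ▸ hx)
    simp [gsel, Finset.mem_insert, hxa]) _

lemma nc_extract {s : Finset (Fin N)} {a : Fin N} (ha : a ∈ s) (J : Finset (Fin N)) :
    s.noncommProd (gsel p q J) (fun x _ y _ _ => hg J x y) =
      gsel p q J a *
        (s.erase a).noncommProd (gsel p q J) (fun x _ y _ _ => hg J x y) := by
  have h1 : insert a (s.erase a) = s := insert_erase ha
  calc s.noncommProd (gsel p q J) (fun x _ y _ _ => hg J x y)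
      = (insert a (s.erase a)).noncommProd (gsel p q J) (fun x _ y _ _ => hg J x y) := by
        exact (noncommProd_congr h1 (fun _ _ => rfl) _).symm
    _ = _ := noncommProd_insert_of_notMem _ _ _ _ (notMem_erase a s)

lemma symP_eq_sum_F (k : ℕ) :
    symP N p q k = ∑ J ∈ powersetCard k (Finset.univ : Finset (Fin N)), Fnc p q hg J := by
  refine sum_congr rfl fun J _ => ?_
  exact list_prod_eq (gsel p q J) _

variable {a b : Fin N}

lemma Fnc_eval (hab : a ≠ b) (J : Finset (Fin N)) :
    Fnc p q hg J = gsel p q J a * (gsel p q J b *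
      ((Finset.univ.erase a).erase b).noncommProd (gsel p q J) (fun x _ y _ _ => hg J x y)) := by
  rw [Fnc, nc_extract p q hg (mem_univ a) J,
    nc_extract p q hg (mem_erase.mpr ⟨hab.symm, mem_univ b⟩) J]

lemma a_not_mem_t : a ∉ (Finset.univ.erase a).erase b :=
  fun h => notMem_erase a Finset.univ (mem_of_mem_erase h)

lemma b_not_mem_t : b ∉ (Finset.univ.erase a).erase b := notMem_erase b _

lemma Fnc_K (hab : a ≠ b){K : Finset (Fin N)} (hK : K ⊆ (Finset.univ.erase a).erase b) :
    Fnc p q hg K = p a * (p b *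
      ((Finset.univ.erase a).erase b).noncommProd (gsel p q K) (fun x _ y _ _ => hg K x y)) := by
  rw [Fnc_eval p q hg hab]
  have ha : a ∉ K := fun h => a_not_mem_t (hK h)
  have hb : b ∉ K := fun h => b_not_mem_t (hK h)
  rw [show gsel p q K a = p a from if_neg ha, show gsel p q K b = p b from if_neg hb]

lemma Fnc_K1 (hab : a ≠ b) {K : Finset (Fin N)} (hK : K ⊆ (Finset.univ.erase a).erase b) :
    Fnc p q hg (insert b K) = p a * (q b *
      ((Finset.univ.erase a).erase b).noncommProd (gsel p q K) (fun x _ y _ _ => hg K x y)) := by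
  rw [Fnc_eval p q hg hab]
  have ha : a ∉ insert b K := by
    simp only [mem_insert, not_or]
    exact ⟨hab, fun h => a_not_mem_t (hK h)⟩
  rw [show gsel p q (insert b K) a = p a from if_neg ha,
    show gsel p q (insert b K) b = q b from if_pos (mem_insert_self b K),
    nc_congr_insert p q hg b_not_mem_t K]

lemma Fnc_K2 (hab : a ≠ b) {K : Finset (Fin N)} (hK : K ⊆ (Finset.univ.erase a).erase b) :
    Fnc p q hg (insert a K) = q a * (p b *
      ((Finset.univ.erase a).erase b).noncommProd (gsel p q K) (fun x _ y _ _ => hg K x y)) := by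
  rw [Fnc_eval p q hg hab]
  have hb : b ∉ insert a K := by
    simp only [mem_insert, not_or]
    exact ⟨hab.symm, fun h => b_not_mem_t (hK h)⟩
  rw [show gsel p q (insert a K) a = q a from if_pos (mem_insert_self a K),
    show gsel p q (insert a K) b = p b from if_neg hb,
    nc_congr_insert p q hg a_not_mem_t K]

lemma Fnc_K3 (hab : a ≠ b) {K : Finset (Fin N)} (hK : K ⊆ (Finset.univ.erase a).erase b) :
    Fnc p q hg (insert a (insert b K)) = q a * (q b *
      ((Finset.univ.erase a).erase b).noncommProd (gsel p q K) (fun x _ y _ _ => hg K x y)) := by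
  rw [Fnc_eval p q hg hab]
  have hb : b ∉ insert a (insert b K) → False := fun h => (by simp at h : False)
  have hbmem : b ∈ insert a (insert b K) := mem_insert_of_mem (mem_insert_self b K)
  rw [show gsel p q (insert a (insert b K)) a = q a from if_pos (mem_insert_self a _),
    show gsel p q (insert a (insert b K)) b = q b from if_pos hbmem,
    nc_congr_insert p q hg a_not_mem_t, nc_congr_insert p q hg b_not_mem_t K]

lemma symP_dec (hab : a ≠ b) (k : ℕ) :
    symP N p q k =
      p a * p b * Rop p q hg ((Finset.univ.erase a).erase b) k +
        (p a * q b + q a * p b) * Rm1 p q hg ((Finset.univ.erase a).erase b) k +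
        q a * q b * Rm2 p q hg ((Finset.univ.erase a).erase b) k := by
  rw [symP_eq_sum_F p q hg k]
  set s1 : Finset (Fin N) := Finset.univ.erase a with hs1
  set t : Finset (Fin N) := s1.erase b with ht
  have h1 : (Finset.univ : Finset (Fin N)) = insert a s1 := (insert_erase (mem_univ a)).symm
  have h2 : s1 = insert b t := (insert_erase (mem_erase.mpr ⟨hab.symm, mem_univ b⟩)).symm
  have hsub : ∀ {m : ℕ} {K : Finset (Fin N)}, K ∈ powersetCard m t → K ⊆ t :=
    fun h => (mem_powersetCard.mp h).1
  have split1 : ∀ (k : ℕ) (G : Finset (Fin N) → E →L[ℂ] E),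
      ∑ J ∈ powersetCard (k + 1) (Finset.univ : Finset (Fin N)), G J =
        (∑ J ∈ powersetCard (k + 1) s1, G J) + ∑ J ∈ powersetCard k s1, G (insert a J) := by
    intro k G
    conv_lhs => rw [h1]
    exact sum_pc_insert (notMem_erase a _) k G
  have split2 : ∀ (k : ℕ) (G : Finset (Fin N) → E →L[ℂ] E),
      ∑ J ∈ powersetCard (k + 1) s1, G J =
        (∑ J ∈ powersetCard (k + 1) t, G J) + ∑ J ∈ powersetCard k t, G (insert b J) := by
    intro k G
    conv_lhs => rw [h2]
    exact sum_pc_insert (notMem_erase b _) k G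
  have S0 : ∀ m, ∑ K ∈ powersetCard m t, Fnc p q hg K = p a * (p b * Rop p q hg t m) := by
    intro m
    rw [Rop, Finset.mul_sum, Finset.mul_sum]
    exact sum_congr rfl fun K hK => Fnc_K p q hg hab (hsub hK)
  have S1 : ∀ m, ∑ K ∈ powersetCard m t, Fnc p q hg (insert b K) =
      p a * (q b * Rop p q hg t m) := by
    intro m
    rw [Rop, Finset.mul_sum, Finset.mul_sum]
    exact sum_congr rfl fun K hK => Fnc_K1 p q hg hab (hsub hK)
  have S2 : ∀ m, ∑ K ∈ powersetCard m t, Fnc p q hg (insert a K) =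
      q a * (p b * Rop p q hg t m) := by
    intro m
    rw [Rop, Finset.mul_sum, Finset.mul_sum]
    exact sum_congr rfl fun K hK => Fnc_K2 p q hg hab (hsub hK)
  have S3 : ∀ m, ∑ K ∈ powersetCard m t, Fnc p q hg (insert a (insert b K)) =
      q a * (q b * Rop p q hg t m) := by
    intro m
    rw [Rop, Finset.mul_sum, Finset.mul_sum]
    exact sum_congr rfl fun K hK => Fnc_K3 p q hg hab (hsub hK)
  match k with
  | 0 =>
    rw [powersetCard_zero, sum_singleton, Fnc_K p q hg hab (empty_subset t)]
    simp only [Rm1, Rm2, mul_zero, add_zero, Rop, powersetCard_zero, sum_singleton, mul_assoc]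
    rfl
  | 1 =>
    rw [split1 0 (Fnc p q hg), split2 0 (Fnc p q hg), S0 1, S1 0]
    rw [powersetCard_zero, sum_singleton, Fnc_K2 p q hg hab (empty_subset t)]
    have hR0 : Rop p q hg t 0 =
        ((Finset.univ.erase a).erase b).noncommProd (gsel p q (∅ : Finset (Fin N)))
          (fun x _ y _ _ => hg ∅ x y) := by
      rw [Rop, powersetCard_zero, sum_singleton]
    rw [← hR0]
    simp only [Rm1, Rm2, mul_zero, add_zero]
    noncomm_ring
  | (m + 2) =>
    rw [split1 (m + 1) (Fnc p q hg), split2 (m + 1) (Fnc p q hg), S0 (m + 2), S1 (m + 1),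
      split2 m (fun J => Fnc p q hg (insert a J)), S2 (m + 1), S3 m]
    simp only [Rm1, Rm2]
    noncomm_ring

end Stmt5Aux

open Stmt5Aux Finset in
theorem stmt5 {E : Type*} [NormedAddCommGroup E] [InnerProductSpace ℂ E] [CompleteSpace E]
    (N : ℕ) (hN : 1 < N) (p q : Fin N → E →L[ℂ] E)
    (hidem : ∀ j, IsIdempotentElem (p j))
    (hsa : ∀ j, IsSelfAdjoint (p j))
    (hcomm : ∀ i j, Commute (p i) (p j))
    (hq : ∀ j, q j = 1 - p j)
    (f : ℕ → ℝ) (hf : ∀ k, 0 ≤ f k)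
    (T : E →L[ℂ] E)
    (hT : ∀ i : Fin N, i ≠ ⟨0, Nat.lt_of_lt_of_le Nat.one_pos hN.le⟩ → i ≠ ⟨1, hN⟩ →
      Commute T (p i)) :
    T * hatW N (symP N p q) f - hatW N (symP N p q) f * T =
      T * (p ⟨0, Nat.lt_of_lt_of_le Nat.one_pos hN.le⟩ * p ⟨1, hN⟩ *
            (hatW N (symP N p q) f - hatShiftW N (symP N p q) f 2) +
          (p ⟨0, Nat.lt_of_lt_of_le Nat.one_pos hN.le⟩ * q ⟨1, hN⟩ +
            q ⟨0, Nat.lt_of_lt_of_le Nat.one_pos hN.le⟩ * p ⟨1, hN⟩) *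
            (hatW N (symP N p q) f - hatShiftW N (symP N p q) f 1)) -
        (p ⟨0, Nat.lt_of_lt_of_le Nat.one_pos hN.le⟩ * p ⟨1, hN⟩ *
            (hatW N (symP N p q) f - hatShiftW N (symP N p q) f 2) +
          (p ⟨0, Nat.lt_of_lt_of_le Nat.one_pos hN.le⟩ * q ⟨1, hN⟩ +
            q ⟨0, Nat.lt_of_lt_of_le Nat.one_pos hN.le⟩ * p ⟨1, hN⟩) *
            (hatW N (symP N p q) f - hatShiftW N (symP N p q) f 1)) * T := by
  have hNpos : 0 < N := Nat.lt_of_lt_of_le Nat.one_pos hN.le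
  obtain ⟨M, rfl⟩ : ∃ M, N = M + 2 := ⟨N - 2, by omega⟩
  set a : Fin (M + 2) := ⟨0, Nat.lt_of_lt_of_le Nat.one_pos hN.le⟩ with hadef
  set b : Fin (M + 2) := ⟨1, hN⟩ with hbdef
  have hab : a ≠ b := by simp [hadef, hbdef, Fin.ext_iff]
  -- basic commutation facts
  have hpq : ∀ i j, Commute (p i) (q j) := fun i j => by
    rw [hq]; exact (Commute.one_right (p i)).sub_right (hcomm i j)
  have hqp : ∀ i j, Commute (q i) (p j) := fun i j => (hpq j i).symm
  have hqq' : ∀ i j, Commute (q i) (q j) := fun i j => by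
    rw [hq j]; exact (Commute.one_right (q i)).sub_right (hqp i j)
  have hg : ∀ (J : Finset (Fin (M + 2))) (i j : Fin (M + 2)),
      Commute (gsel p q J i) (gsel p q J j) := by
    intro J i j
    unfold gsel
    split_ifs
    · exact hqq' i j
    · exact hqp i j
    · exact hpq i j
    · exact hcomm i j
  set t : Finset (Fin (M + 2)) := (Finset.univ.erase a).erase b with htdef
  have hbmem : b ∈ Finset.univ.erase a := mem_erase.mpr ⟨hab.symm, mem_univ b⟩
  have hcardt : t.card = M := by
    rw [htdef, card_erase_of_mem hbmem, card_erase_of_mem (mem_univ a), card_univ,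
      Fintype.card_fin]
    omega
  have hRz : ∀ {m : ℕ}, M < m → Rop p q hg t m = 0 := fun {m} h =>
    Rop_eq_zero p q hg t (by rw [hcardt]; exact h)
  -- idempotents and annihilation
  have hqidem : ∀ j, q j * q j = q j := fun j => by
    rw [hq]
    have h1 : (1 - p j) * (1 - p j) = 1 - p j - (p j - p j * p j) := by noncomm_ring
    rw [h1, (hidem j).eq, sub_self, sub_zero]
  have hpq0 : ∀ j, p j * q j = 0 := fun j => by
    rw [hq, mul_sub, mul_one, (hidem j).eq, sub_self]
  have hqp0 : ∀ j, q j * p j = 0 := fun j => by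
    rw [hq, sub_mul, one_mul, (hidem j).eq, sub_self]
  -- the sixteen products
  have h11 : (p a * p b) * (p a * p b) = p a * p b := by
    rw [(hcomm b a).mul_mul_mul_comm, (hidem a).eq, (hidem b).eq]
  have h12 : (p a * p b) * (p a * q b) = 0 := by
    rw [(hcomm b a).mul_mul_mul_comm, hpq0 b, mul_zero]
  have h13 : (p a * p b) * (q a * p b) = 0 := by
    rw [(hpq b a).mul_mul_mul_comm, hpq0 a, zero_mul]
  have h14 : (p a * p b) * (q a * q b) = 0 := by
    rw [(hpq b a).mul_mul_mul_comm, hpq0 a, zero_mul]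
  have h21 : (p a * q b) * (p a * p b) = 0 := by
    rw [(hqp b a).mul_mul_mul_comm, hqp0 b, mul_zero]
  have h22 : (p a * q b) * (p a * q b) = p a * q b := by
    rw [(hqp b a).mul_mul_mul_comm, (hidem a).eq, hqidem b]
  have h23 : (p a * q b) * (q a * p b) = 0 := by
    rw [(hqq' b a).mul_mul_mul_comm, hpq0 a, zero_mul]
  have h24 : (p a * q b) * (q a * q b) = 0 := by
    rw [(hqq' b a).mul_mul_mul_comm, hpq0 a, zero_mul]
  have h31 : (q a * p b) * (p a * p b) = 0 := by
    rw [(hcomm b a).mul_mul_mul_comm, hqp0 a, zero_mul]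
  have h32 : (q a * p b) * (p a * q b) = 0 := by
    rw [(hcomm b a).mul_mul_mul_comm, hqp0 a, zero_mul]
  have h33 : (q a * p b) * (q a * p b) = q a * p b := by
    rw [(hpq b a).mul_mul_mul_comm, hqidem a, (hidem b).eq]
  have h34 : (q a * p b) * (q a * q b) = 0 := by
    rw [(hpq b a).mul_mul_mul_comm, hpq0 b, mul_zero]
  have h41 : (q a * q b) * (p a * p b) = 0 := by
    rw [(hqp b a).mul_mul_mul_comm, hqp0 a, zero_mul]
  have h42 : (q a * q b) * (p a * q b) = 0 := by
    rw [(hqp b a).mul_mul_mul_comm, hqp0 a, zero_mul]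
  have h43 : (q a * q b) * (q a * p b) = 0 := by
    rw [(hqq' b a).mul_mul_mul_comm, hqp0 b, mul_zero]
  have h44 : (q a * q b) * (q a * q b) = q a * q b := by
    rw [(hqq' b a).mul_mul_mul_comm, hqidem a, hqidem b]
  -- decomposition of symP
  have hdec : ∀ k, symP (M + 2) p q k =
      p a * p b * Rop p q hg t k + (p a * q b + q a * p b) * Rm1 p q hg t k +
        q a * q b * Rm2 p q hg t k := fun k => symP_dec p q hg hab k
  have habs1 : ∀ X Y Z : E →L[ℂ] E,
      (p a * p b) * (p a * p b * X + (p a * q b + q a * p b) * Y + q a * q b * Z) =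
        p a * p b * X := by
    intro X Y Z
    have h : (p a * p b) * (p a * p b * X + (p a * q b + q a * p b) * Y + q a * q b * Z) =
        ((p a * p b) * (p a * p b)) * X + ((p a * p b) * (p a * q b)) * Y +
          ((p a * p b) * (q a * p b)) * Y + ((p a * p b) * (q a * q b)) * Z := by noncomm_ring
    rw [h, h11, h12, h13, h14]; simp
  have habs2 : ∀ X Y Z : E →L[ℂ] E,
      (p a * q b) * (p a * p b * X + (p a * q b + q a * p b) * Y + q a * q b * Z) =
        p a * q b * Y := by
    intro X Y Z
    have h : (p a * q b) * (p a * p b * X + (p a * q b + q a * p b) * Y + q a * q b * Z) =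
        ((p a * q b) * (p a * p b)) * X + ((p a * q b) * (p a * q b)) * Y +
          ((p a * q b) * (q a * p b)) * Y + ((p a * q b) * (q a * q b)) * Z := by noncomm_ring
    rw [h, h21, h22, h23, h24]; simp
  have habs3 : ∀ X Y Z : E →L[ℂ] E,
      (q a * p b) * (p a * p b * X + (p a * q b + q a * p b) * Y + q a * q b * Z) =
        q a * p b * Y := by
    intro X Y Z
    have h : (q a * p b) * (p a * p b * X + (p a * q b + q a * p b) * Y + q a * q b * Z) =
        ((q a * p b) * (p a * p b)) * X + ((q a * p b) * (p a * q b)) * Y +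
          ((q a * p b) * (q a * p b)) * Y + ((q a * p b) * (q a * q b)) * Z := by noncomm_ring
    rw [h, h31, h32, h33, h34]; simp
  have habs4 : ∀ X Y Z : E →L[ℂ] E,
      (q a * q b) * (p a * p b * X + (p a * q b + q a * p b) * Y + q a * q b * Z) =
        q a * q b * Z := by
    intro X Y Z
    have h : (q a * q b) * (p a * p b * X + (p a * q b + q a * p b) * Y + q a * q b * Z) =
        ((q a * q b) * (p a * p b)) * X + ((q a * q b) * (p a * q b)) * Y +
          ((q a * q b) * (q a * p b)) * Y + ((q a * q b) * (q a * q b)) * Z := by noncomm_ring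
    rw [h, h41, h42, h43, h44]; simp
  have hsymP1 : ∀ k, p a * p b * symP (M + 2) p q k = p a * p b * Rop p q hg t k := fun k => by
    rw [hdec k]; exact habs1 _ _ _
  have hsymPx : ∀ k, (p a * q b + q a * p b) * symP (M + 2) p q k =
      (p a * q b + q a * p b) * Rm1 p q hg t k := fun k => by
    rw [hdec k, add_mul, habs2, habs3, ← add_mul]
  have hsymP4 : ∀ k, q a * q b * symP (M + 2) p q k = q a * q b * Rm2 p q hg t k := fun k => by
    rw [hdec k]; exact habs4 _ _ _
  set W : E →L[ℂ] E := hatW (M + 2) (symP (M + 2) p q) f with hWdef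
  set W1 : E →L[ℂ] E := hatShiftW (M + 2) (symP (M + 2) p q) f 1 with hW1def
  set W2 : E →L[ℂ] E := hatShiftW (M + 2) (symP (M + 2) p q) f 2 with hW2def
  set B : E →L[ℂ] E := ∑ m ∈ Finset.range (M + 1), (f (m + 2) : ℂ) • Rop p q hg t m with hBdef
  -- the three sum computations
  have hB2 : p a * p b * W2 = p a * p b * B := by
    rw [hW2def, hBdef, hatShiftW, Finset.mul_sum, Finset.mul_sum]
    simp only [mul_smul_comm, hsymP1]
    symm
    calc ∑ m ∈ Finset.range (M + 1), (f (m + 2) : ℂ) • (p a * p b * Rop p q hg t m)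
        = ∑ m ∈ Finset.range (M + 1),
            (if 0 ≤ (m : ℤ) + 2 ∧ (m : ℤ) + 2 ≤ ((M + 2 : ℕ) : ℤ) then
              ((f (((m : ℤ) + 2).toNat) : ℝ) : ℂ) else 0) • (p a * p b * Rop p q hg t m) := by
          refine Finset.sum_congr rfl fun m hm => ?_
          have hm' : m ≤ M := by have := Finset.mem_range.mp hm; omega
          rw [if_pos (by constructor <;> omega)]
          have htn : ((m : ℤ) + 2).toNat = m + 2 := by omega
          rw [htn]
      _ = ∑ m ∈ Finset.range (M + 2 + 1),
            (if 0 ≤ (m : ℤ) + 2 ∧ (m : ℤ) + 2 ≤ ((M + 2 : ℕ) : ℤ) then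
              ((f (((m : ℤ) + 2).toNat) : ℝ) : ℂ) else 0) • (p a * p b * Rop p q hg t m) := by
          refine Finset.sum_subset (Finset.range_subset_range.mpr (by omega)) fun j hj hj' => ?_
          have hjM : M < j := by
            have h1 := Finset.mem_range.mp hj
            have h2 : ¬ j < M + 1 := fun h => hj' (Finset.mem_range.mpr h)
            omega
          rw [hRz hjM, mul_zero, smul_zero]
  have hB1 : (p a * q b + q a * p b) * W1 = (p a * q b + q a * p b) * B := by
    rw [hW1def, hBdef, hatShiftW, Finset.mul_sum, Finset.mul_sum]
    simp only [mul_smul_comm, hsymPx]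
    rw [Finset.sum_range_succ']
    simp only [Rm1]
    rw [show ((0 : ℕ) : ℤ) + 1 = 1 from rfl]
    simp only [mul_zero, smul_zero, add_zero]
    symm
    calc ∑ m ∈ Finset.range (M + 1),
          (f (m + 2) : ℂ) • ((p a * q b + q a * p b) * Rop p q hg t m)
        = ∑ m ∈ Finset.range (M + 1),
            (if 0 ≤ ((m + 1 : ℕ) : ℤ) + 1 ∧ ((m + 1 : ℕ) : ℤ) + 1 ≤ ((M + 2 : ℕ) : ℤ) then
              ((f ((((m + 1 : ℕ) : ℤ) + 1).toNat) : ℝ) : ℂ) else 0) •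
              ((p a * q b + q a * p b) * Rop p q hg t m) := by
          refine Finset.sum_congr rfl fun m hm => ?_
          have hm' : m ≤ M := by have := Finset.mem_range.mp hm; omega
          rw [if_pos (by constructor <;> push_cast <;> omega)]
          have htn : (((m + 1 : ℕ) : ℤ) + 1).toNat = m + 2 := by push_cast; omega
          rw [htn]
      _ = ∑ m ∈ Finset.range (M + 2),
            (if 0 ≤ ((m + 1 : ℕ) : ℤ) + 1 ∧ ((m + 1 : ℕ) : ℤ) + 1 ≤ ((M + 2 : ℕ) : ℤ) then
              ((f ((((m + 1 : ℕ) : ℤ) + 1).toNat) : ℝ) : ℂ) else 0) •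
              ((p a * q b + q a * p b) * Rop p q hg t m) := by
          refine Finset.sum_subset (Finset.range_subset_range.mpr (by omega)) fun j hj hj' => ?_
          have hjM : M < j := by
            have h1 := Finset.mem_range.mp hj
            have h2 : ¬ j < M + 1 := fun h => hj' (Finset.mem_range.mpr h)
            omega
          rw [hRz hjM, mul_zero, smul_zero]
  have hB4 : q a * q b * W = q a * q b * B := by
    rw [hWdef, hBdef, hatW, Finset.mul_sum, Finset.mul_sum]
    simp only [mul_smul_comm, hsymP4]
    rw [Finset.sum_range_succ', Finset.sum_range_succ']
    simp only [Rm2]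
    simp only [mul_zero, smul_zero, add_zero]
  -- resolution of identity
  have hone : p a * p b + (p a * q b + q a * p b) + q a * q b = 1 := by
    rw [hq a, hq b]
    noncomm_ring
  have hWsplit : W = p a * p b * W + (p a * q b + q a * p b) * W + q a * q b * W := by
    conv_lhs => rw [← one_mul W, ← hone]
    rw [add_mul, add_mul]
  have hkey : W - (p a * p b * (W - W2) + (p a * q b + q a * p b) * (W - W1)) = B := by
    calc W - (p a * p b * (W - W2) + (p a * q b + q a * p b) * (W - W1))
        = (p a * p b * W + (p a * q b + q a * p b) * W + q a * q b * W) -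
            (p a * p b * (W - W2) + (p a * q b + q a * p b) * (W - W1)) := by rw [← hWsplit]
      _ = p a * p b * W2 + (p a * q b + q a * p b) * W1 + q a * q b * W := by noncomm_ring
      _ = p a * p b * B + (p a * q b + q a * p b) * B + q a * q b * B := by
          rw [hB2, hB1, hB4]
      _ = (p a * p b + (p a * q b + q a * p b) + q a * q b) * B := by noncomm_ring
      _ = 1 * B := by rw [hone]
      _ = B := one_mul B
  -- T commutes with B
  have hTg : ∀ (K : Finset (Fin (M + 2))) (x : Fin (M + 2)), x ∈ t → Commute T (gsel p q K x) := by
    intro K x hx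
    rw [htdef] at hx
    have hxb : x ≠ b := (mem_erase.mp hx).1
    have hxa : x ≠ a := (mem_erase.mp (mem_of_mem_erase hx)).1
    unfold gsel
    split_ifs
    · rw [hq]; exact (Commute.one_right T).sub_right (hT x hxa hxb)
    · exact hT x hxa hxb
  have hTR : ∀ m, Commute T (Rop p q hg t m) := by
    intro m
    unfold Rop
    exact Commute.sum_right _ _ _ fun K _ =>
      Finset.noncommProd_commute _ _ _ _ fun x hx => hTg K x hx
  have hTB : Commute T B := by
    rw [hBdef]
    exact Commute.sum_right _ _ _ fun m _ => (hTR m).smul_right _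
  have hcomm2 : T * (W - (p a * p b * (W - W2) + (p a * q b + q a * p b) * (W - W1))) =
      (W - (p a * p b * (W - W2) + (p a * q b + q a * p b) * (W - W1))) * T := by
    rw [hkey]; exact hTB
  rw [sub_eq_sub_iff_sub_eq_sub, ← mul_sub, ← sub_mul]
  exact hcomm2

end
end

section
/- If ψ ∈ L²(ℝ^{3N}) is symmetric under exchange of all variables in a set M₁ containing 1, then for any weight f, ‖f̂ q_1 ψ‖² ≤ (N/|M₁|) ‖f̂ n̂ ψ‖². -/
/- STATEMENT 7: If `ψ` is symmetric under exchange of all variables in a set `M₁ ∋ 1`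
(expressed via a unitary permutation representation `U` intertwining the condensate
projections `p_j`), then `‖f̂ q₁ ψ‖² ≤ (N/|M₁|) ‖f̂ n̂ ψ‖²` with `n(k) = √(k/N)`. -/

set_option linter.unusedSectionVars false

noncomputable section

open scoped ComplexInnerProductSpace

/-! ### Generic list lemmas -/

section auxlist

variable {ι : Type*} {M : Type*} [Monoid M]

lemma aux_pairwise {α : Type*} {Rel : α → α → Prop} (h : ∀ a b, Rel a b) :
    ∀ l : List α, l.Pairwise Rel
  | [] => List.Pairwise.nil
  | a :: l => List.Pairwise.cons (fun b _ => h a b) (aux_pairwise h l)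

lemma aux_prod_mul (a b : ι → M) (h : ∀ i j, Commute (a i) (b j)) :
    ∀ l : List ι, (l.map a).prod * (l.map b).prod = (l.map fun i => a i * b i).prod
  | [] => by simp
  | x :: l => by
      have hc : Commute (b x) ((l.map a).prod) :=
        Commute.list_prod_right _ _ (by
          intro y hy
          obtain ⟨i, -, rfl⟩ := List.mem_map.mp hy
          exact (h i x).symm)
      simp only [List.map_cons, List.prod_cons]
      calc a x * (l.map a).prod * (b x * (l.map b).prod)
          = a x * ((l.map a).prod * b x * (l.map b).prod) := by simp [mul_assoc]
        _ = a x * (b x * (l.map a).prod * (l.map b).prod) := by rw [← hc.eq]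
        _ = a x * b x * ((l.map a).prod * (l.map b).prod) := by simp [mul_assoc]
        _ = a x * b x * (l.map fun i => a i * b i).prod := by rw [aux_prod_mul a b h l]

lemma aux_intertwine (u : M) (a b : ι → M) (h : ∀ i, u * a i = b i * u) :
    ∀ l : List ι, u * (l.map a).prod = (l.map b).prod * u
  | [] => by simp
  | x :: l => by
      simp only [List.map_cons, List.prod_cons]
      rw [← mul_assoc, h x, mul_assoc, aux_intertwine u a b h l, ← mul_assoc]

lemma aux_star_prod {M : Type*} [Monoid M] [StarMul M] :
    ∀ l : List M, (∀ x ∈ l, star x = x) → l.Pairwise Commute → star l.prod = l.prod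
  | [], _, _ => by simp
  | a :: l, h, hp => by
      have h1 : star l.prod = l.prod :=
        aux_star_prod l (fun x hx => h x (List.mem_cons_of_mem _ hx)) hp.of_cons
      have h2 : Commute a l.prod :=
        Commute.list_prod_right _ _ (List.pairwise_cons.mp hp).1
      simp only [List.prod_cons, star_mul, h1, h a List.mem_cons_self]
      exact h2.eq.symm

end auxlist

/-! ### The projections `S_J` and their properties -/

section main

variable {E : Type*} [NormedAddCommGroup E] [InnerProductSpace ℂ E]
variable {N : ℕ} {p q : Fin N → E →L[ℂ] E}

/-- The product of `q j` for `j ∈ J` and `p j` for `j ∉ J`. -/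
def SP (p q : Fin N → E →L[ℂ] E) (J : Finset (Fin N)) : E →L[ℂ] E :=
  ((List.finRange N).map (fun j => if j ∈ J then q j else p j)).prod

lemma symP_eq (p q : Fin N → E →L[ℂ] E) (k : ℕ) :
    symP N p q k = ∑ J ∈ Finset.powersetCard k (Finset.univ : Finset (Fin N)), SP p q J := rfl

variable (hidem : ∀ j, IsIdempotentElem (p j))
variable (hcomm : ∀ i j, Commute (p i) (p j))
variable (hq : ∀ j, q j = 1 - p j)

section props
include hcomm hq

lemma gC (J J' : Finset (Fin N)) (i j : Fin N) :
    Commute (if i ∈ J then q i else p i) (if j ∈ J' then q j else p j) := by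
  have h1 := hcomm i j
  have h2 : Commute (p i) (1 - p j) := (Commute.one_right _).sub_right h1
  have h3 : Commute (1 - p i) (p j) := (Commute.one_left _).sub_left h1
  have h4 : Commute (1 - p i) (1 - p j) := (Commute.one_right _).sub_right h3
  simp only [hq]
  split <;> split <;> assumption

lemma SP_pairwise (J : Finset (Fin N)) (l : List (Fin N)) :
    (l.map (fun j => if j ∈ J then q j else p j)).Pairwise Commute :=
  List.pairwise_map.mpr (aux_pairwise (fun a b => gC hcomm hq J J a b) _)

lemma SP_extract (J : Finset (Fin N)) (j : Fin N) :
    SP p q J = (if j ∈ J then q j else p j) *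
      (((List.finRange N).erase j).map (fun i => if i ∈ J then q i else p i)).prod := by
  have hper := (List.perm_cons_erase (List.mem_finRange j)).map
    (fun i => if i ∈ J then q i else p i)
  unfold SP
  rw [List.Perm.prod_eq' hper (SP_pairwise hcomm hq J _), List.map_cons, List.prod_cons]

lemma commute_q_SP (j : Fin N) (J : Finset (Fin N)) : Commute (q j) (SP p q J) := by
  apply Commute.list_prod_right
  intro x hx
  obtain ⟨i, -, rfl⟩ := List.mem_map.mp hx
  have h := gC hcomm hq Finset.univ J j i
  simpa using h

include hidem

lemma q_idem (j : Fin N) : q j * q j = q j := by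
  rw [hq]; exact (hidem j).one_sub

lemma q_mul_p (j : Fin N) : q j * p j = 0 := by
  rw [hq, sub_mul, one_mul, (hidem j), sub_self]

lemma p_mul_q (j : Fin N) : p j * q j = 0 := by
  rw [hq, mul_sub, mul_one, (hidem j), sub_self]

lemma q_mul_SP (j : Fin N) (J : Finset (Fin N)) :
    q j * SP p q J = if j ∈ J then SP p q J else 0 := by
  rw [SP_extract hcomm hq J j, ← mul_assoc]
  by_cases hj : j ∈ J
  · simp only [hj, if_true]
    rw [q_idem hidem hcomm hq]
  · simp only [hj, if_false]
    rw [q_mul_p hidem hcomm hq, zero_mul]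

lemma SP_mul_SP (J J' : Finset (Fin N)) :
    SP p q J * SP p q J' = if J = J' then SP p q J else 0 := by
  unfold SP
  rw [aux_prod_mul _ _ (fun i j => gC hcomm hq J J' i j)]
  by_cases hJJ : J = J'
  · subst hJJ
    rw [if_pos rfl]
    congr 1
    apply List.map_congr_left
    intro i _
    by_cases hi : i ∈ J
    · simp only [hi, if_true]; exact q_idem hidem hcomm hq i
    · simp only [hi, if_false]; exact hidem i
  · rw [if_neg hJJ]
    obtain ⟨j, hj⟩ : ∃ j, ¬(j ∈ J ↔ j ∈ J') := by
      by_contra hcon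
      push_neg at hcon
      exact hJJ (Finset.ext fun a => hcon a)
    apply List.prod_eq_zero
    refine List.mem_map.mpr ⟨j, List.mem_finRange j, ?_⟩
    by_cases h1 : j ∈ J <;> by_cases h2 : j ∈ J'
    · exact absurd (iff_of_true h1 h2) hj
    · simp only [h1, h2, if_true, if_false]; exact q_mul_p hidem hcomm hq j
    · simp only [h1, h2, if_true, if_false]; exact p_mul_q hidem hcomm hq j
    · exact absurd (iff_of_false h1 h2) hj

lemma symP_mul_symP (k m : ℕ) :
    symP N p q k * symP N p q m = if k = m then symP N p q k else 0 := by
  rw [symP_eq, symP_eq, Finset.sum_mul_sum]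
  by_cases hkm : k = m
  · subst hkm
    rw [if_pos rfl]
    refine Finset.sum_congr rfl fun J hJ => ?_
    rw [Finset.sum_eq_single_of_mem J hJ (fun b _ hb => by
      rw [SP_mul_SP hidem hcomm hq]; exact if_neg (fun h => hb h.symm))]
    rw [SP_mul_SP hidem hcomm hq, if_pos rfl]
  · rw [if_neg hkm]
    apply Finset.sum_eq_zero
    intro J hJ
    apply Finset.sum_eq_zero
    intro J' hJ'
    rw [SP_mul_SP hidem hcomm hq]
    apply if_neg
    rintro rfl
    exact hkm ((Finset.mem_powersetCard_univ.mp hJ).symm.trans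
      (Finset.mem_powersetCard_univ.mp hJ'))

lemma sum_q_symP (k : ℕ) :
    ∑ j : Fin N, q j * symP N p q k = (k : ℂ) • symP N p q k := by
  rw [symP_eq]
  calc ∑ j : Fin N, q j * ∑ J ∈ Finset.powersetCard k Finset.univ, SP p q J
      = ∑ j : Fin N, ∑ J ∈ Finset.powersetCard k Finset.univ,
          (if j ∈ J then SP p q J else 0) := by
        refine Finset.sum_congr rfl fun j _ => ?_
        rw [Finset.mul_sum]
        exact Finset.sum_congr rfl fun J _ => q_mul_SP hidem hcomm hq j J
    _ = ∑ J ∈ Finset.powersetCard k Finset.univ, ∑ j : Fin N,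
          (if j ∈ J then SP p q J else 0) := Finset.sum_comm
    _ = ∑ J ∈ Finset.powersetCard k Finset.univ, (k : ℂ) • SP p q J := by
        refine Finset.sum_congr rfl fun J hJ => ?_
        rw [Finset.sum_ite_mem, Finset.univ_inter, Finset.sum_const,
          Finset.mem_powersetCard_univ.mp hJ, ← Nat.cast_smul_eq_nsmul ℂ]
    _ = (k : ℂ) • ∑ J ∈ Finset.powersetCard k Finset.univ, SP p q J :=
        (Finset.smul_sum).symm

lemma commute_q_symP (j : Fin N) (k : ℕ) : Commute (q j) (symP N p q k) := by
  rw [symP_eq]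
  exact Commute.sum_right _ _ _ fun J _ => commute_q_SP hcomm hq j J

lemma hatW_mul (f₁ f₂ : ℕ → ℝ) :
    hatW N (symP N p q) f₁ * hatW N (symP N p q) f₂
      = hatW N (symP N p q) (fun k => f₁ k * f₂ k) := by
  unfold hatW
  rw [Finset.sum_mul_sum]
  refine Finset.sum_congr rfl fun k hk => ?_
  have key : ∀ m, ((f₁ k : ℂ) • symP N p q k) * ((f₂ m : ℂ) • symP N p q m)
      = if k = m then ((f₁ m * f₂ m : ℝ) : ℂ) • symP N p q m else 0 := by
    intro m
    rw [smul_mul_assoc, mul_smul_comm, smul_smul, symP_mul_symP hidem hcomm hq]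
    by_cases hkm : k = m
    · subst hkm
      rw [if_pos rfl, if_pos rfl]
      congr 1
      push_cast
      ring
    · rw [if_neg hkm, if_neg hkm, smul_zero]
  simp_rw [key]
  rw [Finset.sum_ite_eq, if_pos hk]

lemma commute_q_hatW (j : Fin N) (f' : ℕ → ℝ) :
    Commute (q j) (hatW N (symP N p q) f') := by
  unfold hatW
  exact Commute.sum_right _ _ _ fun k _ =>
    (commute_q_symP hidem hcomm hq j k).smul_right _

lemma sum_q_hatW (f' : ℕ → ℝ) :
    ∑ j : Fin N, q j * hatW N (symP N p q) f'
      = ∑ k ∈ Finset.range (N + 1), ((k : ℂ) * (f' k : ℂ)) • symP N p q k := by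
  unfold hatW
  simp_rw [Finset.mul_sum, mul_smul_comm]
  rw [Finset.sum_comm]
  refine Finset.sum_congr rfl fun k _ => ?_
  rw [← Finset.smul_sum, sum_q_symP hidem hcomm hq, smul_smul, mul_comm]

end props

/-! ### Self-adjointness -/

section sa

variable [CompleteSpace E]
variable (hsa : ∀ j, IsSelfAdjoint (p j))

include hidem hsa hcomm hq

lemma SP_sa (J : Finset (Fin N)) : IsSelfAdjoint (SP p q J) := by
  unfold SP
  apply aux_star_prod
  · intro x hx
    obtain ⟨i, -, rfl⟩ := List.mem_map.mp hx
    by_cases hi : i ∈ J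
    · simp only [hi, if_true]
      have : IsSelfAdjoint (q i) := by
        rw [hq]
        exact (show IsSelfAdjoint (1 : E →L[ℂ] E) from star_one _).sub (hsa i)
      exact this.star_eq
    · simp only [hi, if_false]
      exact (hsa i).star_eq
  · exact SP_pairwise hcomm hq J _

lemma symP_sa (k : ℕ) : IsSelfAdjoint (symP N p q k) := by
  rw [symP_eq]
  show star _ = _
  rw [star_sum]
  exact Finset.sum_congr rfl fun J _ => (SP_sa hidem hcomm hq hsa J).star_eq

lemma hatW_sa (f' : ℕ → ℝ) : IsSelfAdjoint (hatW N (symP N p q) f') := by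
  unfold hatW
  show star _ = _
  rw [star_sum]
  refine Finset.sum_congr rfl fun k _ => ?_
  rw [star_smul, (symP_sa hidem hcomm hq hsa k).star_eq, Complex.star_def,
    Complex.conj_ofReal]

lemma q_sa (j : Fin N) : IsSelfAdjoint (q j) := by
  rw [hq]
  exact (show IsSelfAdjoint (1 : E →L[ℂ] E) from star_one _).sub (hsa j)

end sa

/-! ### Intertwining with the permutation representation -/

section perm

variable (U : Equiv.Perm (Fin N) → E →L[ℂ] E)
variable (hUp : ∀ σ j, U σ * p j = p (σ j) * U σ)

include hcomm hq hUp

lemma U_SP (σ : Equiv.Perm (Fin N)) (J : Finset (Fin N)) :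
    U σ * SP p q J = SP p q (J.image σ) * U σ := by
  have hmem : ∀ i, σ i ∈ J.image σ ↔ i ∈ J := by
    intro i
    simp [Finset.mem_image, σ.injective.eq_iff]
  have hUg : ∀ i, U σ * (if i ∈ J then q i else p i)
      = (if σ i ∈ J.image σ then q (σ i) else p (σ i)) * U σ := by
    intro i
    by_cases hi : i ∈ J
    · rw [if_pos hi, if_pos ((hmem i).mpr hi), hq, hq, mul_sub, sub_mul, mul_one,
        one_mul, hUp]
    · rw [if_neg hi, if_neg (fun h => hi ((hmem i).mp h)), hUp]
  unfold SP
  rw [aux_intertwine (U σ) _ _ hUg]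
  congr 1
  have h1 : (List.finRange N).map (fun i => if σ i ∈ J.image σ then q (σ i) else p (σ i))
      = ((List.finRange N).map σ).map (fun i => if i ∈ J.image σ then q i else p i) := by
    rw [List.map_map]
    rfl
  rw [h1]
  have hperm : ((List.finRange N).map σ).Perm (List.finRange N) := by
    apply List.perm_of_nodup_nodup_toFinset_eq
    · exact (List.nodup_finRange N).map σ.injective
    · exact List.nodup_finRange N
    · ext x
      simp only [List.mem_toFinset, List.mem_map, List.mem_finRange, true_and,
        List.toFinset_finRange, Finset.mem_univ, iff_true]
      exact ⟨σ.symm x, σ.apply_symm_apply x⟩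
  exact List.Perm.prod_eq' (hperm.map _) (SP_pairwise hcomm hq (J.image σ) _)

lemma U_symP (σ : Equiv.Perm (Fin N)) (k : ℕ) :
    U σ * symP N p q k = symP N p q k * U σ := by
  rw [symP_eq, Finset.mul_sum, Finset.sum_mul]
  calc ∑ J ∈ Finset.powersetCard k Finset.univ, U σ * SP p q J
      = ∑ J ∈ Finset.powersetCard k Finset.univ, SP p q (J.image σ) * U σ :=
        Finset.sum_congr rfl fun J _ => U_SP hcomm hq U hUp σ J
    _ = ∑ J ∈ Finset.powersetCard k Finset.univ, SP p q J * U σ := by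
        refine Finset.sum_nbij' (fun J => J.image σ) (fun J => J.image σ.symm)
          ?_ ?_ ?_ ?_ ?_
        · intro J hJ
          rw [Finset.mem_powersetCard_univ] at hJ ⊢
          rw [Finset.card_image_of_injective _ σ.injective, hJ]
        · intro J hJ
          rw [Finset.mem_powersetCard_univ] at hJ ⊢
          rw [Finset.card_image_of_injective _ σ.symm.injective, hJ]
        · intro J _
          simp [Finset.image_image]
        · intro J _
          simp [Finset.image_image]
        · intro J _
          rfl

lemma U_hatW (σ : Equiv.Perm (Fin N)) (f' : ℕ → ℝ) :
    U σ * hatW N (symP N p q) f' = hatW N (symP N p q) f' * U σ := by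
  unfold hatW
  rw [Finset.mul_sum, Finset.sum_mul]
  refine Finset.sum_congr rfl fun k _ => ?_
  rw [mul_smul_comm, smul_mul_assoc, U_symP hcomm hq U hUp σ k]

end perm

end main

theorem stmt7 {E : Type*} [NormedAddCommGroup E] [InnerProductSpace ℂ E] [CompleteSpace E]
    (N : ℕ) (hN : 0 < N) (p q : Fin N → E →L[ℂ] E)
    (hidem : ∀ j, IsIdempotentElem (p j))
    (hsa : ∀ j, IsSelfAdjoint (p j))
    (hcomm : ∀ i j, Commute (p i) (p j))
    (hq : ∀ j, q j = 1 - p j)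
    (U : Equiv.Perm (Fin N) → E →L[ℂ] E)
    (hU1 : U 1 = 1)
    (hUmul : ∀ σ τ, U (σ * τ) = U σ * U τ)
    (hUinner : ∀ σ (x y : E), ⟪U σ x, U σ y⟫ = ⟪x, y⟫)
    (hUp : ∀ σ j, U σ * p j = p (σ j) * U σ)
    (M₁ : Finset (Fin N)) (hM₁ : (⟨0, hN⟩ : Fin N) ∈ M₁)
    (f : ℕ → ℝ) (hf : ∀ k, 0 ≤ f k)
    (ψ : E)
    (hψ : ∀ σ : Equiv.Perm (Fin N), (∀ i ∉ M₁, σ i = i) → U σ ψ = ψ) :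
    ‖(hatW N (symP N p q) f) ((q ⟨0, hN⟩) ψ)‖ ^ 2 ≤
      ((N : ℝ) / M₁.card) *
        ‖(hatW N (symP N p q) f)
          ((hatW N (symP N p q) (fun k => Real.sqrt ((k : ℝ) / N))) ψ)‖ ^ 2 := by
  classical
  set j₀ : Fin N := ⟨0, hN⟩ with hj₀def
  set n : ℕ → ℝ := fun k => Real.sqrt ((k : ℝ) / N) with hn
  set W : E →L[ℂ] E := hatW N (symP N p q) f with hWdef
  set D : E →L[ℂ] E := hatW N (symP N p q) n with hDdef
  set f2 : ℕ → ℝ := fun k => f k * f k with hf2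
  have hNR : (0 : ℝ) < N := Nat.cast_pos.mpr hN
  have hqidem : ∀ j, q j * q j = q j := q_idem hidem hcomm hq
  have hWsa : IsSelfAdjoint W := hatW_sa hidem hcomm hq hsa f
  have hqsa' : ∀ j, IsSelfAdjoint (q j) := q_sa hidem hcomm hq hsa
  have hcomWq : ∀ j, Commute (q j) W := fun j => commute_q_hatW hidem hcomm hq j f
  -- the operator identity  ∑_j (f̂² q_j) = N • (f̂ n̂)²
  have key_op : ∑ j : Fin N, hatW N (symP N p q) f2 * q j
      = (N : ℂ) • ((W * D) * (W * D)) := by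
    have hflip : ∀ j : Fin N, hatW N (symP N p q) f2 * q j
        = q j * hatW N (symP N p q) f2 :=
      fun j => (commute_q_hatW hidem hcomm hq j f2).eq.symm
    simp_rw [hflip]
    rw [sum_q_hatW hidem hcomm hq f2]
    rw [hWdef, hDdef, hatW_mul hidem hcomm hq f n,
      hatW_mul hidem hcomm hq (fun k => f k * n k) (fun k => f k * n k)]
    unfold hatW
    rw [Finset.smul_sum]
    refine Finset.sum_congr rfl fun k _ => ?_
    rw [smul_smul]
    congr 1
    have hnn : n k * n k = (k : ℝ) / N := Real.mul_self_sqrt (by positivity)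
    have : (N : ℝ) * ((f k * n k) * (f k * n k)) = (k : ℝ) * f2 k := by
      have : (f k * n k) * (f k * n k) = f2 k * (n k * n k) := by rw [hf2]; ring
      rw [this, hnn, hf2]
      field_simp
    push_cast
    rw [show ((N : ℂ) * ((f k : ℂ) * (n k : ℂ) * ((f k : ℂ) * (n k : ℂ))))
        = (((N : ℝ) * ((f k * n k) * (f k * n k)) : ℝ) : ℂ) by push_cast; ring, this]
    push_cast
    ring
  -- norms as inner products
  have hT : ∀ j : Fin N, ⟪W ((q j) ψ), W ((q j) ψ)⟫
      = ⟪ψ, (hatW N (symP N p q) f2 * q j) ψ⟫ := by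
    intro j
    have hTsa : IsSelfAdjoint (W * q j) := by
      show star _ = _
      rw [star_mul, (hqsa' j).star_eq, hWsa.star_eq, (hcomWq j).eq]
    have hTT : (W * q j) * (W * q j) = hatW N (symP N p q) f2 * q j := by
      calc (W * q j) * (W * q j) = W * ((q j * W) * q j) := by simp [mul_assoc]
        _ = W * ((W * q j) * q j) := by rw [(hcomWq j).eq]
        _ = (W * W) * (q j * q j) := by simp [mul_assoc]
        _ = hatW N (symP N p q) f2 * q j := by
            rw [hqidem j, hWdef, hatW_mul hidem hcomm hq f f]
    have happ : W ((q j) ψ) = (W * q j) ψ := rfl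
    rw [happ, ← hTT, ContinuousLinearMap.mul_apply]
    have h := ContinuousLinearMap.adjoint_inner_right (W * q j) ψ ((W * q j) ψ)
    rw [← ContinuousLinearMap.star_eq_adjoint, hTsa.star_eq] at h
    exact h.symm
  -- the sum identity over ℂ
  have hWDsa : IsSelfAdjoint (W * D) := by
    have hDsa : IsSelfAdjoint D := hatW_sa hidem hcomm hq hsa n
    have hcomm' : Commute W D := by
      rw [hWdef, hDdef, Commute, SemiconjBy, hatW_mul hidem hcomm hq f n,
        hatW_mul hidem hcomm hq n f]
      congr 1
      funext k
      ring
    show star _ = _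
    rw [star_mul, hDsa.star_eq, hWsa.star_eq, hcomm'.eq]
  have big : ∑ j : Fin N, ⟪W ((q j) ψ), W ((q j) ψ)⟫
      = (N : ℂ) * ⟪W (D ψ), W (D ψ)⟫ := by
    calc ∑ j : Fin N, ⟪W ((q j) ψ), W ((q j) ψ)⟫
        = ∑ j : Fin N, ⟪ψ, (hatW N (symP N p q) f2 * q j) ψ⟫ :=
          Finset.sum_congr rfl fun j _ => hT j
      _ = ⟪ψ, (∑ j : Fin N, hatW N (symP N p q) f2 * q j) ψ⟫ := by
          rw [ContinuousLinearMap.sum_apply, inner_sum]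
      _ = ⟪ψ, ((N : ℂ) • ((W * D) * (W * D))) ψ⟫ := by rw [key_op]
      _ = (N : ℂ) * ⟪ψ, ((W * D) * (W * D)) ψ⟫ := by
          rw [ContinuousLinearMap.smul_apply, inner_smul_right]
      _ = (N : ℂ) * ⟪(W * D) ψ, (W * D) ψ⟫ := by
          congr 1
          have := ContinuousLinearMap.adjoint_inner_right (W * D) ψ ((W * D) ψ)
          rw [← ContinuousLinearMap.star_eq_adjoint, hWDsa.star_eq] at this
          rw [← this, ContinuousLinearMap.mul_apply]
      _ = (N : ℂ) * ⟪W (D ψ), W (D ψ)⟫ := by rw [ContinuousLinearMap.mul_apply]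
  have hreal : ∑ j : Fin N, ‖W ((q j) ψ)‖ ^ 2 = (N : ℝ) * ‖W (D ψ)‖ ^ 2 := by
    simp only [inner_self_eq_norm_sq_to_K] at big
    have hbig2 : ((∑ j : Fin N, ‖W ((q j) ψ)‖ ^ 2 : ℝ) : ℂ)
        = (((N : ℝ) * ‖W (D ψ)‖ ^ 2 : ℝ) : ℂ) := by push_cast; exact big
    exact Complex.ofReal_injective hbig2
  -- symmetry: all terms with j ∈ M₁ are equal
  have hperm : ∀ j ∈ M₁, ‖W ((q j) ψ)‖ = ‖W ((q j₀) ψ)‖ := by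
    intro j hj
    set σ : Equiv.Perm (Fin N) := Equiv.swap j₀ j with hσ
    have hfix : ∀ i ∉ M₁, σ i = i := fun i hi =>
      Equiv.swap_apply_of_ne_of_ne (fun h => hi (h ▸ hM₁)) (fun h => hi (h ▸ hj))
    have hψσ : U σ ψ = ψ := hψ σ hfix
    have h1 : U σ * q j₀ = q j * U σ := by
      rw [hq, hq, mul_sub, sub_mul, mul_one, one_mul, hUp σ j₀]
      have : σ j₀ = j := Equiv.swap_apply_left j₀ j
      rw [this]
    have h2 : U σ * W = W * U σ := U_hatW hcomm hq U hUp σ f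
    have hx : W ((q j) ψ) = U σ (W ((q j₀) ψ)) := by
      conv_lhs => rw [← hψσ]
      calc W ((q j) (U σ ψ)) = (W * (q j * U σ)) ψ := by
            simp [ContinuousLinearMap.mul_apply]
        _ = (W * (U σ * q j₀)) ψ := by rw [h1]
        _ = ((W * U σ) * q j₀) ψ := by rw [mul_assoc]
        _ = ((U σ * W) * q j₀) ψ := by rw [h2]
        _ = U σ (W ((q j₀) ψ)) := by simp [ContinuousLinearMap.mul_apply]
    rw [hx]
    have hin := hUinner σ (W ((q j₀) ψ)) (W ((q j₀) ψ))
    rw [inner_self_eq_norm_sq_to_K, inner_self_eq_norm_sq_to_K] at hin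
    have h4 : ‖U σ (W ((q j₀) ψ))‖ ^ 2 = ‖W ((q j₀) ψ)‖ ^ 2 := by exact_mod_cast hin
    calc ‖U σ (W ((q j₀) ψ))‖ = Real.sqrt (‖U σ (W ((q j₀) ψ))‖ ^ 2) :=
          (Real.sqrt_sq (norm_nonneg _)).symm
      _ = Real.sqrt (‖W ((q j₀) ψ)‖ ^ 2) := by rw [h4]
      _ = ‖W ((q j₀) ψ)‖ := Real.sqrt_sq (norm_nonneg _)
  -- final arithmetic
  have hM1pos : 0 < (M₁.card : ℝ) := by
    exact_mod_cast Finset.card_pos.mpr ⟨j₀, hM₁⟩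
  have hle : (M₁.card : ℝ) * ‖W ((q j₀) ψ)‖ ^ 2 ≤ (N : ℝ) * ‖W (D ψ)‖ ^ 2 := by
    calc (M₁.card : ℝ) * ‖W ((q j₀) ψ)‖ ^ 2
        = ∑ j ∈ M₁, ‖W ((q j) ψ)‖ ^ 2 := by
          rw [Finset.sum_congr rfl (fun j hj => by rw [hperm j hj]),
            Finset.sum_const, nsmul_eq_mul]
      _ ≤ ∑ j : Fin N, ‖W ((q j) ψ)‖ ^ 2 :=
          Finset.sum_le_sum_of_subset_of_nonneg (Finset.subset_univ M₁)
            (fun _ _ _ => by positivity)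
      _ = (N : ℝ) * ‖W (D ψ)‖ ^ 2 := hreal
  rw [div_mul_eq_mul_div, le_div_iff₀ hM1pos]
  nlinarith [hle]

end
end

section
/- Let Γ, Λ ∈ L²(ℝ^{3N}) be symmetric in all variables of a set M with j ∉ M and k, l ∈ M, k ≠ l, and let O_{j,k} be an operator acting only on coordinates j and k. Then |⟨Γ, O_{j,k} Λ⟩| ≤ ‖Γ‖ (|⟨O_{j,k}Λ, O_{j,l}Λ⟩| + |M|^{-1} ‖O_{j,k}Λ‖²)^{1/2}. -/
/- STATEMENT 10: Let `Γ, Λ` be symmetric in all variables of a set `M` with `j ∉ M`,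
`k, l ∈ M`, `k ≠ l` (symmetry expressed through a unitary permutation representation `U`),
and let `O_{j,m}` be a family of bounded operators acting only on coordinates `j` and `m`,
covariant under permutations fixing `j`. Then
`|⟨Γ, O_{j,k} Λ⟩| ≤ ‖Γ‖ (|⟨O_{j,k}Λ, O_{j,l}Λ⟩| + |M|⁻¹ ‖O_{j,k}Λ‖²)^{1/2}`. -/

open scoped ComplexInnerProductSpace

theorem stmt10 {E : Type*} [NormedAddCommGroup E] [InnerProductSpace ℂ E]
    (N : ℕ) (M : Finset (Fin N)) (j k l : Fin N)
    (hj : j ∉ M) (hk : k ∈ M) (hl : l ∈ M) (hkl : k ≠ l)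
    (U : Equiv.Perm (Fin N) → E →L[ℂ] E)
    (hU1 : U 1 = 1)
    (hUmul : ∀ σ τ, U (σ * τ) = U σ * U τ)
    (hUinner : ∀ σ (x y : E), ⟪U σ x, U σ y⟫ = ⟪x, y⟫)
    (O : Fin N → E →L[ℂ] E)
    (hO : ∀ σ : Equiv.Perm (Fin N), σ j = j → ∀ m, U σ * O m = O (σ m) * U σ)
    (Γ Λ : E)
    (hΓ : ∀ σ : Equiv.Perm (Fin N), (∀ i ∉ M, σ i = i) → U σ Γ = Γ)
    (hΛ : ∀ σ : Equiv.Perm (Fin N), (∀ i ∉ M, σ i = i) → U σ Λ = Λ) :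
    ‖⟪Γ, (O k) Λ⟫‖ ≤
      ‖Γ‖ * Real.sqrt (‖⟪(O k) Λ, (O l) Λ⟫‖ +
        ((M.card : ℝ))⁻¹ * ‖(O k) Λ‖ ^ 2) := by
  classical
  have hcard : 0 < M.card := Finset.card_pos.2 ⟨k, hk⟩
  have hc : (0:ℝ) < (M.card : ℝ) := by exact_mod_cast hcard
  have hcast : ((M.card : ℂ)) ≠ 0 := by exact_mod_cast hcard.ne'
  -- action of permutations supported in M on `O m Λ`
  have key : ∀ σ : Equiv.Perm (Fin N), (∀ i ∉ M, σ i = i) →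
      ∀ m, U σ (O m Λ) = O (σ m) Λ := by
    intro σ hfix m
    have hσj : σ j = j := hfix j hj
    have h := hO σ hσj m
    have h2 : (U σ * O m) Λ = (O (σ m) * U σ) Λ := by rw [h]
    simpa [ContinuousLinearMap.mul_apply, hΛ σ hfix] using h2
  have hnormU : ∀ σ (x : E), ‖U σ x‖ = ‖x‖ := by
    intro σ x
    have h1 : (⟪U σ x, U σ x⟫ : ℂ) = ⟪x, x⟫ := hUinner σ x x
    rw [inner_self_eq_norm_sq_to_K, inner_self_eq_norm_sq_to_K] at h1
    have h2 : (‖U σ x‖ : ℝ) ^ 2 = ‖x‖ ^ 2 := by exact_mod_cast h1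
    nlinarith [norm_nonneg (U σ x), norm_nonneg x]
  -- A: ⟪Γ, O m Λ⟫ = ⟪Γ, O k Λ⟫ for m ∈ M
  have hA : ∀ m ∈ M, ⟪Γ, O m Λ⟫ = ⟪Γ, O k Λ⟫ := by
    intro m hm
    have hfix : ∀ i ∉ M, Equiv.swap k m i = i := by
      intro i hi
      exact Equiv.swap_apply_of_ne_of_ne (by rintro rfl; exact hi hk)
        (by rintro rfl; exact hi hm)
    calc ⟪Γ, O m Λ⟫ = ⟪U (Equiv.swap k m) Γ, U (Equiv.swap k m) (O k Λ)⟫ := by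
          rw [hΓ _ hfix, key _ hfix k, Equiv.swap_apply_left]
      _ = ⟪Γ, O k Λ⟫ := hUinner _ _ _
  -- norms agree
  have hnorm : ∀ m ∈ M, ‖O m Λ‖ = ‖O k Λ‖ := by
    intro m hm
    have hfix : ∀ i ∉ M, Equiv.swap k m i = i := by
      intro i hi
      exact Equiv.swap_apply_of_ne_of_ne (by rintro rfl; exact hi hk)
        (by rintro rfl; exact hi hm)
    calc ‖O m Λ‖ = ‖U (Equiv.swap k m) (O k Λ)‖ := by
          rw [key _ hfix k, Equiv.swap_apply_left]
      _ = ‖O k Λ‖ := hnormU _ _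
  -- B: off-diagonal inner products agree
  have hB : ∀ m ∈ M, ∀ m' ∈ M, m ≠ m' → ⟪O m Λ, O m' Λ⟫ = ⟪O k Λ, O l Λ⟫ := by
    intro m hm m' hm' hmm'
    set t := Equiv.swap k m l with ht
    have htM : t ∈ M := by
      rw [ht, Equiv.swap_apply_def]
      split_ifs <;> assumption
    have htm : t ≠ m := by
      intro h
      exact hkl ((Equiv.swap k m).injective
        (h.trans (Equiv.swap_apply_left k m).symm)).symm
    set σ := Equiv.swap t m' * Equiv.swap k m with hσ
    have hfix : ∀ i ∉ M, σ i = i := by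
      intro i hi
      have h1 : Equiv.swap k m i = i := Equiv.swap_apply_of_ne_of_ne
        (by rintro rfl; exact hi hk) (by rintro rfl; exact hi hm)
      have h2 : Equiv.swap t m' i = i := Equiv.swap_apply_of_ne_of_ne
        (by rintro rfl; exact hi htM) (by rintro rfl; exact hi hm')
      rw [hσ, Equiv.Perm.mul_apply, h1, h2]
    have hσk : σ k = m := by
      rw [hσ, Equiv.Perm.mul_apply, Equiv.swap_apply_left,
        Equiv.swap_apply_of_ne_of_ne (Ne.symm htm) hmm']
    have hσl : σ l = m' := by
      rw [hσ, Equiv.Perm.mul_apply, ← ht, Equiv.swap_apply_left]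
    calc ⟪O m Λ, O m' Λ⟫ = ⟪U σ (O k Λ), U σ (O l Λ)⟫ := by
          rw [key σ hfix k, key σ hfix l, hσk, hσl]
      _ = ⟪O k Λ, O l Λ⟫ := hUinner _ _ _
  set a := O k Λ with ha
  set C : ℝ := ‖(⟪a, O l Λ⟫ : ℂ)‖ with hC
  set f : E := (M.card : ℂ)⁻¹ • ∑ m ∈ M, O m Λ with hf
  have hΓf : ⟪Γ, f⟫ = ⟪Γ, a⟫ := by
    rw [hf, inner_smul_right, inner_sum, Finset.sum_congr rfl hA,
      Finset.sum_const, nsmul_eq_mul]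
    rw [← mul_assoc, inv_mul_cancel₀ hcast, one_mul]
  -- bound the double sum
  have hS : ∑ m ∈ M, ∑ m' ∈ M, ‖(⟪O m Λ, O m' Λ⟫ : ℂ)‖ ≤
      (M.card : ℝ) * (‖a‖ ^ 2 + (M.card : ℝ) * C) := by
    have hinner : ∀ m ∈ M, ∑ m' ∈ M, ‖(⟪O m Λ, O m' Λ⟫ : ℂ)‖ ≤
        ‖a‖ ^ 2 + (M.card : ℝ) * C := by
      intro m hm
      rw [← Finset.add_sum_erase M _ hm]
      have hdiag : ‖(⟪O m Λ, O m Λ⟫ : ℂ)‖ = ‖a‖ ^ 2 := by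
        rw [inner_self_eq_norm_sq_to_K, hnorm m hm, norm_pow, RCLike.norm_ofReal, abs_norm]
      have hoff : ∑ m' ∈ M.erase m, ‖(⟪O m Λ, O m' Λ⟫ : ℂ)‖ ≤ (M.card : ℝ) * C := by
        have : ∀ m' ∈ M.erase m, ‖(⟪O m Λ, O m' Λ⟫ : ℂ)‖ = C := by
          intro m' hm'
          rw [hB m hm m' (Finset.mem_of_mem_erase hm')
            (Ne.symm (Finset.ne_of_mem_erase hm'))]
        rw [Finset.sum_congr rfl this, Finset.sum_const, nsmul_eq_mul]
        have hle : ((M.erase m).card : ℝ) ≤ (M.card : ℝ) := by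
          exact_mod_cast Finset.card_le_card (Finset.erase_subset _ _)
        have hC0 : 0 ≤ C := norm_nonneg _
        nlinarith
      rw [hdiag]
      linarith
    calc ∑ m ∈ M, ∑ m' ∈ M, ‖(⟪O m Λ, O m' Λ⟫ : ℂ)‖
        ≤ ∑ _m ∈ M, (‖a‖ ^ 2 + (M.card : ℝ) * C) := Finset.sum_le_sum hinner
      _ = (M.card : ℝ) * (‖a‖ ^ 2 + (M.card : ℝ) * C) := by
          rw [Finset.sum_const, nsmul_eq_mul]
  -- ‖f‖² ≤ C + card⁻¹ ‖a‖²
  have hfsq : ‖f‖ ^ 2 ≤ C + (M.card : ℝ)⁻¹ * ‖a‖ ^ 2 := by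
    have hnf : ‖f‖ = (M.card : ℝ)⁻¹ * ‖∑ m ∈ M, O m Λ‖ := by
      rw [hf, norm_smul]
      simp
    have hsum2 : ‖∑ m ∈ M, O m Λ‖ ^ 2 ≤ (M.card : ℝ) * (‖a‖ ^ 2 + (M.card : ℝ) * C) := by
      have h1 : (‖∑ m ∈ M, O m Λ‖ : ℝ) ^ 2 ≤ ‖(⟪∑ m ∈ M, O m Λ, ∑ m' ∈ M, O m' Λ⟫ : ℂ)‖ := by
        rw [inner_self_eq_norm_sq_to_K, norm_pow, RCLike.norm_ofReal, abs_norm]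
      have h2 : ‖(⟪∑ m ∈ M, O m Λ, ∑ m' ∈ M, O m' Λ⟫ : ℂ)‖ ≤
          ∑ m ∈ M, ∑ m' ∈ M, ‖(⟪O m Λ, O m' Λ⟫ : ℂ)‖ := by
        rw [sum_inner]
        refine (norm_sum_le _ _).trans (Finset.sum_le_sum fun m _ => ?_)
        rw [inner_sum]
        exact norm_sum_le _ _
      linarith
    rw [hnf, mul_pow]
    have hnn : (0:ℝ) ≤ ((M.card : ℝ)⁻¹) ^ 2 := sq_nonneg _
    calc ((M.card : ℝ)⁻¹) ^ 2 * ‖∑ m ∈ M, O m Λ‖ ^ 2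
        ≤ ((M.card : ℝ)⁻¹) ^ 2 * ((M.card : ℝ) * (‖a‖ ^ 2 + (M.card : ℝ) * C)) :=
          mul_le_mul_of_nonneg_left hsum2 hnn
      _ = C + (M.card : ℝ)⁻¹ * ‖a‖ ^ 2 := by
          field_simp
          ring
  have hfle : ‖f‖ ≤ Real.sqrt (C + (M.card : ℝ)⁻¹ * ‖a‖ ^ 2) := by
    rw [← Real.sqrt_sq (norm_nonneg f)]
    exact Real.sqrt_le_sqrt hfsq
  calc ‖⟪Γ, a⟫‖ = ‖(⟪Γ, f⟫ : ℂ)‖ := by rw [hΓf]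
    _ ≤ ‖Γ‖ * ‖f‖ := norm_inner_le_norm Γ f
    _ ≤ ‖Γ‖ * Real.sqrt (C + (M.card : ℝ)⁻¹ * ‖a‖ ^ 2) :=
        mul_le_mul_of_nonneg_left hfle (norm_nonneg Γ)
    _ = ‖Γ‖ * Real.sqrt (‖⟪a, O l Λ⟫‖ + (M.card : ℝ)⁻¹ * ‖a‖ ^ 2) := by
        rw [hC]
end

section
/- Let g : ℝ³ × ℝ³ → ℝ be measurable with |g(z₁,z₂)| ≤ G(z₂ − z₁) a.e. for some G ∈ L¹(ℝ³), and φ ∈ L²(ℝ³) ∩ L^∞(ℝ³) normalized. Then the operator p₁ g(z₁,z₂) p₁ on L²(ℝ³ × ℝ³), with p₁ = |φ⟩⟨φ| in the first variable, has operator norm at most ‖φ‖²_{L^∞} ‖G‖_{L¹}. -/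
/- STATEMENT 14: For `g` measurable with `|g(z₁,z₂)| ≤ G(z₂−z₁)` a.e., `G ∈ L¹(ℝ³)` and
normalized `φ ∈ L²(ℝ³) ∩ L^∞(ℝ³)`, the operator `p₁ g(z₁,z₂) p₁` on `L²(ℝ³ × ℝ³)` has
operator norm at most `‖φ‖²_∞ ‖G‖₁`. Expressed as a bilinear form bound, with
`(p₁ψ)(z₁,z₂) = φ(z₁) ∫ φ̄(w) ψ(w,z₂) dw`. -/

open MeasureTheory

noncomputable def condProj (φ : (Fin 3 → ℝ) → ℂ) (ψ : (Fin 3 → ℝ) × (Fin 3 → ℝ) → ℂ) :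
    (Fin 3 → ℝ) × (Fin 3 → ℝ) → ℂ :=
  fun z => φ z.1 * ∫ w : Fin 3 → ℝ, (starRingEnd ℂ) (φ w) * ψ (w, z.2)

open MeasureTheory.Measure
open scoped ENNReal NNReal

abbrev Vv : Type := Fin 3 → ℝ

lemma key (φ : Vv → ℂ) (g : Vv × Vv → ℝ) (G : Vv → ℝ)
    (hφm : StronglyMeasurable φ)
    (hφ2 : MemLp φ 2 volume) (hφtop : MemLp φ ⊤ volume)
    (hφnorm : eLpNorm φ 2 volume = 1)
    (hg : Measurable g) (hG : Integrable G volume)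
    (hbound : ∀ᵐ z : Vv × Vv, |g z| ≤ G (z.2 - z.1))
    (ψ₁ ψ₂ : Vv × Vv → ℂ) (hm1 : StronglyMeasurable ψ₁) (hm2 : StronglyMeasurable ψ₂)
    (h1 : MemLp ψ₁ 2 volume) (h2 : MemLp ψ₂ 2 volume) :
    ‖∫ z : Vv × Vv, (starRingEnd ℂ) (condProj φ ψ₁ z) * (g z : ℂ) * condProj φ ψ₂ z‖ ≤
      (eLpNorm φ ⊤ volume).toReal ^ 2 * (∫ w : Vv, |G w|) *
        ((eLpNorm ψ₁ 2 volume).toReal * (eLpNorm ψ₂ 2 volume).toReal) := by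
  have conj22 : Real.HolderConjugate 2 2 := Real.HolderConjugate.two_two
  set C := eLpNorm φ ⊤ volume with hC
  set N₁ := eLpNorm ψ₁ 2 volume with hN₁
  set N₂ := eLpNorm ψ₂ 2 volume with hN₂
  set Gint := ∫⁻ w : Vv, (‖G w‖₊ : ℝ≥0∞) with hGL
  set F₁ : Vv → ℂ := fun y => ∫ w : Vv, (starRingEnd ℂ) (φ w) * ψ₁ (w, y) with hF₁def
  set F₂ : Vv → ℂ := fun y => ∫ w : Vv, (starRingEnd ℂ) (φ w) * ψ₂ (w, y) with hF₂def
  set A₁ : Vv → ℝ≥0∞ := fun y => ∫⁻ w : Vv, (‖ψ₁ (w, y)‖₊ : ℝ≥0∞) ^ (2:ℝ) with hA₁def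
  set A₂ : Vv → ℝ≥0∞ := fun y => ∫⁻ w : Vv, (‖ψ₂ (w, y)‖₊ : ℝ≥0∞) ^ (2:ℝ) with hA₂def
  -- normalized φ
  have hφ1 : (∫⁻ w : Vv, (‖φ w‖₊ : ℝ≥0∞) ^ (2:ℝ)) ^ (1/2 : ℝ) = 1 := by
    rw [← hφnorm, eLpNorm_eq_lintegral_rpow_enorm_toReal (by norm_num) (by norm_num)]
    norm_num
    rfl
  -- slice Cauchy-Schwarz
  have hF : ∀ (ψ : Vv × Vv → ℂ) (hm : StronglyMeasurable ψ) (y : Vv),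
      (‖(∫ w : Vv, (starRingEnd ℂ) (φ w) * ψ (w, y))‖₊ : ℝ≥0∞) ≤
        (∫⁻ w : Vv, (‖ψ (w, y)‖₊ : ℝ≥0∞) ^ (2:ℝ)) ^ (1/2 : ℝ) := by
    intro ψ hm y
    calc (‖(∫ w : Vv, (starRingEnd ℂ) (φ w) * ψ (w, y))‖₊ : ℝ≥0∞)
        ≤ ∫⁻ w : Vv, (‖(starRingEnd ℂ) (φ w) * ψ (w, y)‖₊ : ℝ≥0∞) :=
          enorm_integral_le_lintegral_enorm _
      _ = ∫⁻ w : Vv, ((fun w => (‖φ w‖₊ : ℝ≥0∞)) * fun w => (‖ψ (w, y)‖₊ : ℝ≥0∞)) w := by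
          simp [nnnorm_mul]
      _ ≤ (∫⁻ w : Vv, (‖φ w‖₊ : ℝ≥0∞) ^ (2:ℝ)) ^ (1/2 : ℝ) *
            (∫⁻ w : Vv, (‖ψ (w, y)‖₊ : ℝ≥0∞) ^ (2:ℝ)) ^ (1/2 : ℝ) :=
          ENNReal.lintegral_mul_le_Lp_mul_Lq volume conj22
            (hφm.measurable.nnnorm.coe_nnreal_ennreal.aemeasurable)
            ((hm.measurable.comp (measurable_prodMk_right (m := _))).nnnorm.coe_nnreal_ennreal.aemeasurable)
      _ = (∫⁻ w : Vv, (‖ψ (w, y)‖₊ : ℝ≥0∞) ^ (2:ℝ)) ^ (1/2 : ℝ) := by rw [hφ1, one_mul]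
  have hF₁ : ∀ y, (‖F₁ y‖₊ : ℝ≥0∞) ≤ (A₁ y) ^ (1/2 : ℝ) := hF ψ₁ hm1
  have hF₂ : ∀ y, (‖F₂ y‖₊ : ℝ≥0∞) ≤ (A₂ y) ^ (1/2 : ℝ) := hF ψ₂ hm2
  -- measurability of A's
  have hAmeas : ∀ (ψ : Vv × Vv → ℂ), StronglyMeasurable ψ →
      Measurable (fun y : Vv => ∫⁻ w : Vv, (‖ψ (w, y)‖₊ : ℝ≥0∞) ^ (2:ℝ)) := by
    intro ψ hm
    exact Measurable.lintegral_prod_left'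
      (f := fun z : Vv × Vv => (‖ψ z‖₊ : ℝ≥0∞) ^ (2:ℝ))
      (hm.measurable.nnnorm.coe_nnreal_ennreal.pow_const _)
  have hA₁m : Measurable A₁ := hAmeas ψ₁ hm1
  have hA₂m : Measurable A₂ := hAmeas ψ₂ hm2
  -- lintegral of A equals square of L² norm
  have hAint : ∀ (ψ : Vv × Vv → ℂ), StronglyMeasurable ψ →
      ((∫⁻ y : Vv, ∫⁻ w : Vv, (‖ψ (w, y)‖₊ : ℝ≥0∞) ^ (2:ℝ)) ^ (1/2 : ℝ)
        = eLpNorm ψ 2 volume) := by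
    intro ψ hm
    rw [eLpNorm_eq_lintegral_rpow_enorm_toReal (by norm_num) (by norm_num)]
    have h2 : (2:ℝ≥0∞).toReal = (2:ℝ) := by norm_num
    simp only [enorm_eq_nnnorm]
    rw [h2, volume_eq_prod,
      lintegral_prod_symm' _ (hm.measurable.nnnorm.coe_nnreal_ennreal.pow_const _)]
  -- second Cauchy-Schwarz
  have hCS2 : ∫⁻ y : Vv, (‖F₁ y‖₊ : ℝ≥0∞) * (‖F₂ y‖₊ : ℝ≥0∞) ≤ N₁ * N₂ := by
    calc ∫⁻ y : Vv, (‖F₁ y‖₊ : ℝ≥0∞) * (‖F₂ y‖₊ : ℝ≥0∞)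
        ≤ ∫⁻ y : Vv, ((fun y => (A₁ y) ^ (1/2:ℝ)) * fun y => (A₂ y) ^ (1/2:ℝ)) y :=
          lintegral_mono fun y => mul_le_mul' (hF₁ y) (hF₂ y)
      _ ≤ (∫⁻ y : Vv, ((A₁ y) ^ (1/2:ℝ)) ^ (2:ℝ)) ^ (1/2:ℝ) *
            (∫⁻ y : Vv, ((A₂ y) ^ (1/2:ℝ)) ^ (2:ℝ)) ^ (1/2:ℝ) :=
          ENNReal.lintegral_mul_le_Lp_mul_Lq volume conj22
            ((hA₁m.pow_const _).aemeasurable) ((hA₂m.pow_const _).aemeasurable)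
      _ = N₁ * N₂ := by
          have hsq : ∀ x : ℝ≥0∞, (x ^ (1/2:ℝ)) ^ (2:ℝ) = x := fun x => by
            rw [← ENNReal.rpow_mul]; norm_num
          simp_rw [hsq]
          rw [hN₁, hN₂, ← hAint ψ₁ hm1, ← hAint ψ₂ hm2]
  -- essSup bound lifted to the product
  have hCne : C ≠ ∞ := hφtop.eLpNorm_ne_top
  have hGne : Gint ≠ ∞ := ne_of_lt hG.2
  have hφC : ∀ᵐ z : Vv × Vv, (‖φ z.1‖₊ : ℝ≥0∞) ≤ C := by
    have h0 : ∀ᵐ x : Vv, (‖φ x‖₊ : ℝ≥0∞) ≤ C := by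
      rw [hC, eLpNorm_exponent_top]
      exact enorm_ae_le_eLpNormEssSup φ volume
    rw [volume_eq_prod]
    exact Measure.quasiMeasurePreserving_fst.tendsto_ae.eventually h0
  -- the bound hypothesis, sliced
  have hb2 : ∀ᵐ y : Vv, ∀ᵐ x : Vv, (‖g (x, y)‖₊ : ℝ≥0∞) ≤ (‖G (y - x)‖₊ : ℝ≥0∞) := by
    rw [volume_eq_prod] at hbound
    have hswap : ∀ᵐ z : Vv × Vv ∂((volume : Measure Vv).prod volume),
        |g (z.2, z.1)| ≤ G (z.1 - z.2) :=
      (measurePreserving_swap (μ := (volume : Measure Vv)) (ν := volume)).quasiMeasurePreserving.tendsto_ae.eventually hbound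
    filter_upwards [ae_ae_of_ae_prod hswap] with y hy
    filter_upwards [hy] with x hx
    have hxx : ‖g (x, y)‖ ≤ ‖G (y - x)‖ := by
      rw [Real.norm_eq_abs, Real.norm_eq_abs]
      exact hx.trans (le_abs_self _)
    exact ENNReal.coe_le_coe.2 (by exact_mod_cast hxx)
  -- translation invariance
  have hGtrans : ∀ y : Vv, ∫⁻ x : Vv, (‖G (y - x)‖₊ : ℝ≥0∞) = Gint := by
    intro y
    rw [hGL]
    exact (Measure.measurePreserving_sub_left volume y).lintegral_comp_emb
      (MeasurableEquiv.subLeft y).measurableEmbedding (fun x => (‖G x‖₊ : ℝ≥0∞))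
  -- measurability of F₁ F₂
  have hFm : ∀ (ψ : Vv × Vv → ℂ), StronglyMeasurable ψ →
      StronglyMeasurable (fun y : Vv => ∫ w : Vv, (starRingEnd ℂ) (φ w) * ψ (w, y)) := by
    intro ψ hm
    exact StronglyMeasurable.integral_prod_left'
      (f := fun z : Vv × Vv => (starRingEnd ℂ) (φ z.1) * ψ z)
      (((Complex.continuous_conj.measurable.comp (hφm.measurable.comp measurable_fst)).mul hm.measurable).stronglyMeasurable)
  have hFm₁ : StronglyMeasurable F₁ := hFm ψ₁ hm1
  have hFm₂ : StronglyMeasurable F₂ := hFm ψ₂ hm2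
  -- pointwise bound
  have hpt : ∀ᵐ z : Vv × Vv,
      (‖(starRingEnd ℂ) (condProj φ ψ₁ z) * (g z : ℂ) * condProj φ ψ₂ z‖₊ : ℝ≥0∞)
        ≤ C ^ 2 * ((‖g z‖₊ : ℝ≥0∞) * ((‖F₁ z.2‖₊ : ℝ≥0∞) * (‖F₂ z.2‖₊ : ℝ≥0∞))) := by
    filter_upwards [hφC] with z hz
    have heq : (‖(starRingEnd ℂ) (condProj φ ψ₁ z) * (g z : ℂ) * condProj φ ψ₂ z‖₊ : ℝ≥0∞)
        = ((‖φ z.1‖₊ : ℝ≥0∞) * (‖F₁ z.2‖₊ : ℝ≥0∞)) * (‖g z‖₊ : ℝ≥0∞) *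
            ((‖φ z.1‖₊ : ℝ≥0∞) * (‖F₂ z.2‖₊ : ℝ≥0∞)) := by
      simp [condProj, nnnorm_mul, ENNReal.coe_mul, ← hF₁def, ← hF₂def]
      rfl
    rw [heq]
    calc ((‖φ z.1‖₊ : ℝ≥0∞) * (‖F₁ z.2‖₊ : ℝ≥0∞)) * (‖g z‖₊ : ℝ≥0∞) *
            ((‖φ z.1‖₊ : ℝ≥0∞) * (‖F₂ z.2‖₊ : ℝ≥0∞))
        ≤ (C * (‖F₁ z.2‖₊ : ℝ≥0∞)) * (‖g z‖₊ : ℝ≥0∞) * (C * (‖F₂ z.2‖₊ : ℝ≥0∞)) := by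
          gcongr
      _ = C ^ 2 * ((‖g z‖₊ : ℝ≥0∞) * ((‖F₁ z.2‖₊ : ℝ≥0∞) * (‖F₂ z.2‖₊ : ℝ≥0∞))) := by ring
  -- measurability for Fubini
  have measH : Measurable fun z : Vv × Vv =>
      (‖g z‖₊ : ℝ≥0∞) * ((‖F₁ z.2‖₊ : ℝ≥0∞) * (‖F₂ z.2‖₊ : ℝ≥0∞)) :=
    hg.nnnorm.coe_nnreal_ennreal.mul
      (((hFm₁.measurable.comp measurable_snd).nnnorm.coe_nnreal_ennreal).mul
        ((hFm₂.measurable.comp measurable_snd).nnnorm.coe_nnreal_ennreal))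
  -- main chain
  have main : (‖∫ z : Vv × Vv,
      (starRingEnd ℂ) (condProj φ ψ₁ z) * (g z : ℂ) * condProj φ ψ₂ z‖₊ : ℝ≥0∞)
        ≤ C ^ 2 * (Gint * (N₁ * N₂)) := by
    calc (‖∫ z : Vv × Vv,
        (starRingEnd ℂ) (condProj φ ψ₁ z) * (g z : ℂ) * condProj φ ψ₂ z‖₊ : ℝ≥0∞)
        ≤ ∫⁻ z : Vv × Vv,
            (‖(starRingEnd ℂ) (condProj φ ψ₁ z) * (g z : ℂ) * condProj φ ψ₂ z‖₊ : ℝ≥0∞) :=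
          enorm_integral_le_lintegral_enorm _
      _ ≤ ∫⁻ z : Vv × Vv,
            C ^ 2 * ((‖g z‖₊ : ℝ≥0∞) * ((‖F₁ z.2‖₊ : ℝ≥0∞) * (‖F₂ z.2‖₊ : ℝ≥0∞))) :=
          lintegral_mono_ae hpt
      _ = C ^ 2 * ∫⁻ z : Vv × Vv,
            (‖g z‖₊ : ℝ≥0∞) * ((‖F₁ z.2‖₊ : ℝ≥0∞) * (‖F₂ z.2‖₊ : ℝ≥0∞)) :=
          lintegral_const_mul' _ _ (ENNReal.pow_ne_top hCne)
      _ = C ^ 2 * ∫⁻ y : Vv, ∫⁻ x : Vv,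
            (‖g (x, y)‖₊ : ℝ≥0∞) * ((‖F₁ y‖₊ : ℝ≥0∞) * (‖F₂ y‖₊ : ℝ≥0∞)) := by
          rw [volume_eq_prod, lintegral_prod_symm' _ measH]
      _ = C ^ 2 * ∫⁻ y : Vv, (∫⁻ x : Vv, (‖g (x, y)‖₊ : ℝ≥0∞)) *
            ((‖F₁ y‖₊ : ℝ≥0∞) * (‖F₂ y‖₊ : ℝ≥0∞)) := by
          congr 1
          refine lintegral_congr fun y => ?_
          exact lintegral_mul_const' _ _ (by finiteness)
      _ ≤ C ^ 2 * ∫⁻ y : Vv, Gint * ((‖F₁ y‖₊ : ℝ≥0∞) * (‖F₂ y‖₊ : ℝ≥0∞)) := by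
          refine mul_le_mul' le_rfl (lintegral_mono_ae ?_)
          filter_upwards [hb2] with y hy
          exact mul_le_mul' ((lintegral_mono_ae hy).trans (hGtrans y).le) le_rfl
      _ = C ^ 2 * (Gint * ∫⁻ y : Vv, (‖F₁ y‖₊ : ℝ≥0∞) * (‖F₂ y‖₊ : ℝ≥0∞)) := by
          rw [lintegral_const_mul' _ _ hGne]
      _ ≤ C ^ 2 * (Gint * (N₁ * N₂)) :=
          mul_le_mul' le_rfl (mul_le_mul' le_rfl hCS2)
  -- conversion to real numbers
  have hfin : C ^ 2 * (Gint * (N₁ * N₂)) ≠ ∞ :=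
    ENNReal.mul_ne_top (ENNReal.pow_ne_top hCne)
      (ENNReal.mul_ne_top hGne (ENNReal.mul_ne_top h1.eLpNorm_ne_top h2.eLpNorm_ne_top))
  have hmono := ENNReal.toReal_mono hfin main
  have hGint_eq : Gint.toReal = ∫ w : Vv, |G w| := by
    have : ∫ w : Vv, |G w| = ∫ w : Vv, ‖G w‖ := by simp [Real.norm_eq_abs]
    rw [this, integral_norm_eq_lintegral_enorm hG.1, hGL]
    rfl
  rw [ENNReal.toReal_mul, ENNReal.toReal_mul, ENNReal.toReal_mul, ENNReal.toReal_pow] at hmono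
  simp only [ENNReal.coe_toReal, coe_nnnorm] at hmono
  rw [hGint_eq] at hmono
  calc ‖∫ z : Vv × Vv, (starRingEnd ℂ) (condProj φ ψ₁ z) * (g z : ℂ) * condProj φ ψ₂ z‖
      ≤ C.toReal ^ 2 * ((∫ w : Vv, |G w|) * (N₁.toReal * N₂.toReal)) := hmono
    _ = C.toReal ^ 2 * (∫ w : Vv, |G w|) * (N₁.toReal * N₂.toReal) := by ring

theorem stmt14 (φ : (Fin 3 → ℝ) → ℂ) (g : (Fin 3 → ℝ) × (Fin 3 → ℝ) → ℝ)
    (G : (Fin 3 → ℝ) → ℝ)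
    (hφ2 : MemLp φ 2 volume) (hφtop : MemLp φ ⊤ volume)
    (hφnorm : eLpNorm φ 2 volume = 1)
    (hg : Measurable g) (hG : Integrable G volume)
    (hbound : ∀ᵐ z : (Fin 3 → ℝ) × (Fin 3 → ℝ), |g z| ≤ G (z.2 - z.1))
    (ψ₁ ψ₂ : (Fin 3 → ℝ) × (Fin 3 → ℝ) → ℂ)
    (h1 : MemLp ψ₁ 2 volume) (h2 : MemLp ψ₂ 2 volume) :
    ‖∫ z : (Fin 3 → ℝ) × (Fin 3 → ℝ),
        (starRingEnd ℂ) (condProj φ ψ₁ z) * (g z : ℂ) * condProj φ ψ₂ z‖ ≤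
      (eLpNorm φ ⊤ volume).toReal ^ 2 * (∫ w : Fin 3 → ℝ, |G w|) *
        ((eLpNorm ψ₁ 2 volume).toReal * (eLpNorm ψ₂ 2 volume).toReal) := by
  set φ' : Vv → ℂ := hφ2.1.mk φ with hφ'def
  have hφ'm : StronglyMeasurable φ' := hφ2.1.stronglyMeasurable_mk
  have hφeq : φ =ᵐ[volume] φ' := hφ2.1.ae_eq_mk
  set ψ₁' : Vv × Vv → ℂ := h1.1.mk ψ₁ with hψ₁'def
  set ψ₂' : Vv × Vv → ℂ := h2.1.mk ψ₂ with hψ₂'def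
  have hψ₁eq : ψ₁ =ᵐ[volume] ψ₁' := h1.1.ae_eq_mk
  have hψ₂eq : ψ₂ =ᵐ[volume] ψ₂' := h2.1.ae_eq_mk
  -- congruence for condProj
  have hcp : ∀ (ψ ψ' : Vv × Vv → ℂ), ψ =ᵐ[volume] ψ' →
      ∀ᵐ z : Vv × Vv, condProj φ ψ z = condProj φ' ψ' z := by
    intro ψ ψ' hψ
    have hFeq : ∀ᵐ y : Vv,
        (∫ w : Vv, (starRingEnd ℂ) (φ w) * ψ (w, y)) =
          ∫ w : Vv, (starRingEnd ℂ) (φ' w) * ψ' (w, y) := by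
      rw [volume_eq_prod] at hψ
      have hsw : ∀ᵐ z : Vv × Vv ∂((volume : Measure Vv).prod volume),
          ψ (z.2, z.1) = ψ' (z.2, z.1) :=
        (measurePreserving_swap (μ := (volume : Measure Vv))
          (ν := volume)).quasiMeasurePreserving.tendsto_ae.eventually hψ
      filter_upwards [ae_ae_of_ae_prod hsw] with y hy
      refine integral_congr_ae ?_
      filter_upwards [hy, hφeq] with x hx hfx
      rw [hx, hfx]
    have hsnd : ∀ᵐ z : Vv × Vv ∂((volume : Measure Vv).prod volume),
        (∫ w : Vv, (starRingEnd ℂ) (φ w) * ψ (w, z.2)) =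
          ∫ w : Vv, (starRingEnd ℂ) (φ' w) * ψ' (w, z.2) :=
      Measure.quasiMeasurePreserving_snd.tendsto_ae.eventually hFeq
    have hfst : ∀ᵐ z : Vv × Vv ∂((volume : Measure Vv).prod volume), φ z.1 = φ' z.1 :=
      Measure.quasiMeasurePreserving_fst.tendsto_ae.eventually hφeq
    rw [volume_eq_prod]
    filter_upwards [hsnd, hfst] with z hz1 hz2
    simp only [condProj]
    rw [hz1, hz2]
  have hL : (∫ z : Vv × Vv, (starRingEnd ℂ) (condProj φ ψ₁ z) * (g z : ℂ) * condProj φ ψ₂ z)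
      = ∫ z : Vv × Vv, (starRingEnd ℂ) (condProj φ' ψ₁' z) * (g z : ℂ) * condProj φ' ψ₂' z := by
    refine integral_congr_ae ?_
    filter_upwards [hcp ψ₁ ψ₁' hψ₁eq, hcp ψ₂ ψ₂' hψ₂eq] with z h1z h2z
    rw [h1z, h2z]
  rw [hL, eLpNorm_congr_ae hφeq, eLpNorm_congr_ae hψ₁eq, eLpNorm_congr_ae hψ₂eq]
  exact key φ' g G hφ'm (hφ2.ae_eq hφeq) (hφtop.ae_eq hφeq)
    (by rw [← eLpNorm_congr_ae hφeq]; exact hφnorm) hg hG hbound ψ₁' ψ₂'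
    h1.1.stronglyMeasurable_mk h2.1.stronglyMeasurable_mk
    (h1.ae_eq hψ₁eq) (h2.ae_eq hψ₂eq)
end
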